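/- arXiv:0801.2524 — 9 statements merged into one kernel-verified Lean document; each statement's English description precedes it below -/
import Mathlib

section
/- The number of permutations of size K+1 (K ≥ 2) that have exactly one descent, do not start with the value 1, and do not end with the value K+1, is 2^{K−1}. -/
def descents (l : List ℕ) : ℕ :=
  (l.zip l.tail).countP (fun p => decide (p.2 < p.1))
def permToList {n : ℕ} (σ : Equiv.Perm (Fin n)) : List ℕ :=
  List.ofFn (fun i => (σ i : ℕ) + 1)

lemma descents_cons_cons (a b : ℕ) (t : List ℕ) :
    descents (a :: b :: t) = (if b < a then 1 else 0) + descents (b :: t) := by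
  simp [descents, List.countP_cons]
  omega

lemma descents_eq_zero_iff (l : List ℕ) : descents l = 0 ↔ l.IsChain (· ≤ ·) := by
  match l with
  | [] => simp [descents]
  | [a] => simp [descents]
  | a :: b :: t =>
    rw [descents_cons_cons, List.isChain_cons_cons, ← descents_eq_zero_iff (b :: t)]
    split <;> omega

lemma descents_eq_one (l : List ℕ) (h : descents l = 1) :
    ∃ l₁ l₂, l = l₁ ++ l₂ ∧ l₁ ≠ [] ∧ l₂ ≠ [] ∧ l₁.IsChain (· ≤ ·) ∧ l₂.IsChain (· ≤ ·) ∧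
      ∀ x ∈ l₁.getLast?, ∀ y ∈ l₂.head?, y < x := by
  match l with
  | [] => simp [descents] at h
  | [a] => simp [descents] at h
  | a :: b :: t =>
    rw [descents_cons_cons] at h
    by_cases hba : b < a
    · refine ⟨[a], b :: t, by simp, by simp, by simp, by simp, ?_, ?_⟩
      · rw [if_pos hba] at h
        rw [← descents_eq_zero_iff]; omega
      · simp [hba]
    · simp [hba] at h
      obtain ⟨l₁, l₂, heq, h1, h2, hc1, hc2, hj⟩ := descents_eq_one (b :: t) h
      refine ⟨a :: l₁, l₂, by simp [heq], by simp, h2, ?_, hc2, ?_⟩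
      · rw [List.isChain_cons]
        refine ⟨?_, hc1⟩
        intro y hy
        have : l₁.head? = some b := by
          cases l₁ with
          | nil => simp at h1
          | cons c t' => simp at heq ⊢; exact heq.1.symm
        rw [this] at hy
        simp at hy
        subst hy
        exact le_of_not_gt hba
      · intro x hx y hy
        apply hj x _ y hy
        cases l₁ with
        | nil => exact absurd rfl h1
        | cons c t' => rwa [List.getLast?_cons_cons] at hx

lemma descents_eq_one_of (l₁ l₂ : List ℕ) (h1 : l₁ ≠ []) (h2 : l₂ ≠ [])
    (hc1 : l₁.IsChain (· ≤ ·)) (hc2 : l₂.IsChain (· ≤ ·))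
    (hj : ∀ x ∈ l₁.getLast?, ∀ y ∈ l₂.head?, y < x) :
    descents (l₁ ++ l₂) = 1 := by
  match l₁ with
  | [] => exact absurd rfl h1
  | [a] =>
    match l₂ with
    | [] => exact absurd rfl h2
    | b :: t =>
      have hba : b < a := hj a (by simp) b (by simp)
      rw [List.singleton_append, descents_cons_cons, if_pos hba,
        (descents_eq_zero_iff _).mpr hc2]
  | a :: c :: t =>
    rw [List.cons_append, List.cons_append, descents_cons_cons, ← List.cons_append,
      if_neg (by rw [List.isChain_cons_cons] at hc1; omega),
      descents_eq_one_of (c :: t) l₂ (by simp) h2 (List.IsChain.tail hc1) hc2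
        (by intro x hx y hy; exact hj x (by rwa [List.getLast?_cons_cons]) y hy)]

section
variable {n : ℕ}

def listOf (A : Finset (Fin n)) : List (Fin n) := A.sort (· ≤ ·) ++ Aᶜ.sort (· ≤ ·)

lemma length_listOf (A : Finset (Fin n)) : (listOf A).length = n := by
  have := Finset.card_le_univ A
  simp [listOf, Finset.card_compl]
  simp at this
  omega

lemma nodup_listOf (A : Finset (Fin n)) : (listOf A).Nodup := by
  refine List.Nodup.append (A.sort_nodup _) (Aᶜ.sort_nodup _) ?_
  intro x hx hx'
  rw [Finset.mem_sort] at hx hx'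
  simp at hx'
  exact hx' hx

lemma mem_listOf (A : Finset (Fin n)) (v : Fin n) : v ∈ listOf A := by
  rcases em (v ∈ A) with h | h <;> simp [listOf, Finset.mem_sort, h]

noncomputable def permOf (A : Finset (Fin n)) : Equiv.Perm (Fin n) :=
  Equiv.ofBijective (fun i => (listOf A)[(i : ℕ)]'(by rw [length_listOf]; exact i.isLt))
    (Finite.injective_iff_bijective.mp (by
      intro i j hij
      have := (List.nodup_iff_injective_get).mp (nodup_listOf A)
      have h2 := this (a₁ := ⟨i, by rw [length_listOf]; exact i.isLt⟩)
        (a₂ := ⟨j, by rw [length_listOf]; exact j.isLt⟩) (by simpa using hij)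
      simpa [Fin.ext_iff] using h2))

lemma permOf_apply (A : Finset (Fin n)) (i : Fin n) :
    permOf A i = (listOf A)[(i : ℕ)]'(by rw [length_listOf]; exact i.isLt) := rfl

lemma ofFn_permOf (A : Finset (Fin n)) : List.ofFn (permOf A) = listOf A := by
  apply List.ext_getElem (by simp [length_listOf])
  intro i h1 h2
  simp [permOf_apply]

end

section main
variable {K : ℕ}

abbrev fm : Fin (K+1) → ℕ := fun v => (v : ℕ) + 1

lemma permToList_eq (σ : Equiv.Perm (Fin (K+1))) :
    permToList σ = (List.ofFn σ).map fm := by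
  rw [List.map_ofFn]; rfl

lemma sortedmap (s : Finset (Fin (K+1))) : ((s.sort (· ≤ ·)).map fm).IsChain (· ≤ ·) := by
  apply List.Pairwise.isChain
  exact List.Pairwise.map _ (fun a b h => by simpa [fm] using h) (s.pairwise_sort _)

lemma sort_ne_nil {s : Finset (Fin (K+1))} (h : s.Nonempty) : s.sort (· ≤ ·) ≠ [] := by
  apply List.ne_nil_of_length_pos
  rw [Finset.length_sort]
  exact Finset.card_pos.mpr h

lemma getLast?_sort_map {s : Finset (Fin (K+1))} (h : s.Nonempty) :
    ((s.sort (· ≤ ·)).map fm).getLast? = some (fm (s.max' h)) := by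
  rw [List.getLast?_map, List.getLast?_eq_getLast_of_ne_nil (sort_ne_nil h)]
  simp only [Option.map_some]
  have h2 : (s.sort (· ≤ ·)).getLast (sort_ne_nil h) = s.max' h := by
    rw [List.getLast_eq_getElem]
    exact Finset.sorted_last_eq_max' (s := s)
  rw [h2]

lemma head?_sort_map {s : Finset (Fin (K+1))} (h : s.Nonempty) :
    ((s.sort (· ≤ ·)).map fm).head? = some (fm (s.min' h)) := by
  rw [List.head?_map, List.head?_eq_head (sort_ne_nil h)]
  simp only [Option.map_some]
  have h2 : (s.sort (· ≤ ·)).head (sort_ne_nil h) = s.min' h := by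
    rw [List.head_eq_getElem_zero]
    exact Finset.sorted_zero_eq_min' (s := s)
  rw [h2]

-- valid A: Fin.last K ∈ A and 0 ∉ A
lemma mapsInto (hK : 2 ≤ K) (A : Finset (Fin (K+1))) (hl : Fin.last K ∈ A)
    (h0 : (0 : Fin (K+1)) ∉ A) :
    descents (permToList (permOf A)) = 1 ∧ (permToList (permOf A)).getD 0 0 ≠ 1 ∧
      (permToList (permOf A)).getD K 0 ≠ K + 1 := by
  have hAne : A.Nonempty := ⟨_, hl⟩
  have h0c : (0 : Fin (K+1)) ∈ Aᶜ := Finset.mem_compl.mpr h0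
  have hAcne : Aᶜ.Nonempty := ⟨_, h0c⟩
  have hmax : A.max' hAne = Fin.last K := le_antisymm (Fin.le_last _) (A.le_max' _ hl)
  have hmin : Aᶜ.min' hAcne = 0 := le_antisymm (Finset.min'_le _ _ h0c) (Fin.zero_le _)
  have hlist : permToList (permOf A) = ((A.sort (· ≤ ·)).map fm) ++ ((Aᶜ.sort (· ≤ ·)).map fm) := by
    rw [permToList_eq, ofFn_permOf, listOf, List.map_append]
  have hcard : A.card + Aᶜ.card = K + 1 := by
    have h1 : Aᶜ.card = (K+1) - A.card := by rw [Finset.card_compl]; simp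
    have h2 : A.card ≤ K+1 := by simpa using Finset.card_le_univ A
    omega
  have hcA : 1 ≤ A.card := Finset.card_pos.mpr hAne
  have hcAc : 1 ≤ Aᶜ.card := Finset.card_pos.mpr hAcne
  refine ⟨?_, ?_, ?_⟩
  · rw [hlist]
    refine descents_eq_one_of _ _ ?_ ?_ ?_ ?_ ?_
    · simp [sort_ne_nil hAne]
    · simp [sort_ne_nil hAcne]
    · exact sortedmap A
    · exact sortedmap Aᶜ
    · intro x hx y hy
      rw [getLast?_sort_map hAne] at hx
      rw [head?_sort_map hAcne] at hy
      simp at hx hy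
      subst hx hy
      rw [hmax, hmin]
      simp [fm]
      omega
  · rw [hlist]
    have hlen : 0 < (((A.sort (· ≤ ·)).map fm) ++ ((Aᶜ.sort (· ≤ ·)).map fm)).length := by
      simp only [List.length_append, List.length_map, Finset.length_sort]; omega
    rw [List.getD_eq_getElem _ _ hlen, List.getElem_append_left (by simp only [List.length_append, List.length_map, Finset.length_sort]; omega),
      List.getElem_map]
    have : (A.sort (· ≤ ·))[0]'(by simp only [List.length_append, List.length_map, Finset.length_sort]; omega) = A.min' hAne := Finset.sorted_zero_eq_min'
    rw [this]
    have : A.min' hAne ≠ 0 := fun h => h0 (h ▸ A.min'_mem hAne)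
    simp only [fm]
    intro h
    apply this
    ext
    simp only [Fin.val_zero]
    omega
  · rw [hlist]
    have hlen : K < (((A.sort (· ≤ ·)).map fm) ++ ((Aᶜ.sort (· ≤ ·)).map fm)).length := by
      simp only [List.length_append, List.length_map, Finset.length_sort]; omega
    rw [List.getD_eq_getElem _ _ hlen, List.getElem_append_right (by simp only [List.length_append, List.length_map, Finset.length_sort]; omega),
      List.getElem_map]
    have hidx : K - ((A.sort (· ≤ ·)).map fm).length = (Aᶜ.sort (· ≤ ·)).length - 1 := by
      simp only [List.length_append, List.length_map, Finset.length_sort]; omega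
    have : (Aᶜ.sort (· ≤ ·))[K - ((A.sort (· ≤ ·)).map fm).length]'(by simp only [List.length_append, List.length_map, Finset.length_sort]; omega)
        = Aᶜ.max' hAcne := by
      have haux : ∀ (i : ℕ) (hi : i < (Aᶜ.sort (· ≤ ·)).length),
          i = (Aᶜ.sort (· ≤ ·)).length - 1 → (Aᶜ.sort (· ≤ ·))[i]'hi = Aᶜ.max' hAcne := by
        rintro i hi rfl
        exact Finset.sorted_last_eq_max'
      exact haux _ _ hidx
    rw [this]
    have : Aᶜ.max' hAcne ≠ Fin.last K := by
      intro h
      have := Aᶜ.max'_mem hAcne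
      rw [h] at this
      exact (Finset.mem_compl.mp this) hl
    simp [fm, Fin.ext_iff, Fin.last] at this ⊢
    omega

end main

section main2
variable {K : ℕ}

lemma card_listOf_left {A : Finset (Fin (K+1))} (hAne : A.Nonempty) :
    A.card - 1 < (listOf A).length := by
  have h1 : 1 ≤ A.card := Finset.card_pos.mpr hAne
  have h2 : A.card ≤ K + 1 := by simpa using Finset.card_le_univ A
  rw [length_listOf]
  omega

lemma listOf_at_card {A : Finset (Fin (K+1))} (hl : Fin.last K ∈ A) :
    (listOf A)[A.card - 1]'(card_listOf_left ⟨_, hl⟩) = Fin.last K := by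
  have hAne : A.Nonempty := ⟨_, hl⟩
  have h1 : 1 ≤ A.card := Finset.card_pos.mpr hAne
  have hmax : A.max' hAne = Fin.last K := le_antisymm (Fin.le_last _) (A.le_max' _ hl)
  simp only [listOf]
  rw [List.getElem_append_left (by rw [Finset.length_sort]; omega)]
  have haux : ∀ (i : ℕ) (hi : i < (A.sort (· ≤ ·)).length),
      i = (A.sort (· ≤ ·)).length - 1 → (A.sort (· ≤ ·))[i]'hi = A.max' hAne := by
    rintro i hi rfl
    exact Finset.sorted_last_eq_max' (s := A)
  rw [haux _ _ (by simp), hmax]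

lemma permOf_inj {A A' : Finset (Fin (K+1))} (hl : Fin.last K ∈ A) (hl' : Fin.last K ∈ A')
    (h : permOf A = permOf A') : A = A' := by
  have hL : listOf A = listOf A' := by rw [← ofFn_permOf, h, ofFn_permOf]
  have e1 := listOf_at_card hl
  have e2 := listOf_at_card hl'
  have e1' : (listOf A')[A.card - 1]'(by rw [← hL]; exact card_listOf_left ⟨_, hl⟩) = Fin.last K :=
    (List.getElem_of_eq hL.symm _).trans e1
  have hcc : A.card - 1 = A'.card - 1 := by
    exact ((nodup_listOf A').getElem_inj_iff).mp (e1'.trans e2.symm)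
  have h1 : 1 ≤ A.card := Finset.card_pos.mpr ⟨_, hl⟩
  have h1' : 1 ≤ A'.card := Finset.card_pos.mpr ⟨_, hl'⟩
  have hc : A.card = A'.card := by omega
  have hs : A.sort (· ≤ ·) = A'.sort (· ≤ ·) := by
    have t1 : (listOf A).take A.card = A.sort (· ≤ ·) :=
      List.take_left' (by simp)
    have t2 : (listOf A').take A'.card = A'.sort (· ≤ ·) :=
      List.take_left' (by simp)
    rw [← t1, ← t2, hL, hc]
  ext x
  rw [← Finset.mem_sort (· ≤ ·), ← Finset.mem_sort (· ≤ ·), hs]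

end main2

section main3
variable {K : ℕ}

lemma permToList_getD_zero (σ : Equiv.Perm (Fin (K+1))) :
    (permToList σ).getD 0 0 = (σ 0 : ℕ) + 1 := by
  rw [permToList, List.getD_eq_getElem _ _ (by simp), List.getElem_ofFn]
  rfl

lemma permToList_getD_K (σ : Equiv.Perm (Fin (K+1))) :
    (permToList σ).getD K 0 = (σ (Fin.last K) : ℕ) + 1 := by
  rw [permToList, List.getD_eq_getElem _ _ (by simp), List.getElem_ofFn]
  rfl

lemma gel {α : Type*} {l l' : List α} (h : l = l') {i j : ℕ} (hij : i = j)
    (hi : i < l.length) : l[i]'hi = l'[j]'(by subst h hij; exact hi) := by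
  subst h hij; rfl

lemma permOf_surj (σ : Equiv.Perm (Fin (K+1)))
    (hd : descents (permToList σ) = 1)
    (h0 : (permToList σ).getD 0 0 ≠ 1)
    (hK' : (permToList σ).getD K 0 ≠ K + 1) :
    ∃ A : Finset (Fin (K+1)), (Fin.last K ∈ A ∧ (0 : Fin (K+1)) ∉ A) ∧ permOf A = σ := by
  classical
  set l := List.ofFn σ with hldef
  have hlen : l.length = K + 1 := by simp [hldef]
  have hnd : l.Nodup := List.nodup_ofFn.mpr σ.injective
  have hmem : ∀ v, v ∈ l := fun v => by
    rw [hldef, List.mem_ofFn]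
    exact ⟨σ.symm v, by simp⟩
  have hσ0 : (σ 0 : ℕ) ≠ 0 := by
    rw [permToList_getD_zero] at h0
    omega
  have hσK : (σ (Fin.last K) : ℕ) ≠ K := by
    rw [permToList_getD_K] at hK'
    omega
  rw [permToList_eq] at hd
  obtain ⟨m₁, m₂, heq, hm1ne, hm2ne, hc1, hc2, _⟩ := descents_eq_one _ hd
  have heq' : l.map fm = m₁ ++ m₂ := heq
  set k := m₁.length with hkdef
  have hk1 : 1 ≤ k := by
    cases m₁ with
    | nil => exact absurd rfl hm1ne
    | cons a t => simp [hkdef]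
  have hklen : k + m₂.length = K + 1 := by
    have := congrArg List.length heq'
    simp [hlen] at this
    omega
  have hm2len : 1 ≤ m₂.length := by
    cases m₂ with
    | nil => exact absurd rfl hm2ne
    | cons a t => simp
  set l₁ := l.take k with hl₁
  set l₂ := l.drop k with hl₂
  have hm₁ : m₁ = l₁.map fm := by
    rw [hl₁, List.map_take, heq', List.take_left]
  have hm₂ : m₂ = l₂.map fm := by
    rw [hl₂, List.map_drop, heq', List.drop_left]
  have hsplit : l₁ ++ l₂ = l := List.take_append_drop k l
  have hnd1 : l₁.Nodup := (List.take_sublist k l).nodup hnd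
  have hnd2 : l₂.Nodup := (List.drop_sublist k l).nodup hnd
  have hlen1 : l₁.length = k := by
    rw [hl₁, List.length_take, hlen]; omega
  have hlen2 : l₂.length = K + 1 - k := by
    rw [hl₂, List.length_drop, hlen]
  have hs1 : l₁.Pairwise (· ≤ ·) := by
    rw [← List.isChain_iff_pairwise]
    rw [hm₁, List.isChain_map] at hc1
    exact hc1.imp (fun a b h => by simpa [fm] using h)
  have hs2 : l₂.Pairwise (· ≤ ·) := by
    rw [← List.isChain_iff_pairwise]
    rw [hm₂, List.isChain_map] at hc2
    exact hc2.imp (fun a b h => by simpa [fm] using h)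
  set A := l₁.toFinset with hA
  have hsortA : A.sort (· ≤ ·) = l₁ := (List.toFinset_sort _ hnd1).mpr hs1
  have hdisj : l₁.Disjoint l₂ := by
    rw [← hsplit] at hnd
    exact List.disjoint_of_nodup_append hnd
  have hAc : Aᶜ = l₂.toFinset := by
    ext v
    simp only [Finset.mem_compl, hA, List.mem_toFinset]
    constructor
    · intro hv
      have := hmem v
      rw [← hsplit, List.mem_append] at this
      tauto
    · intro hv hv1
      exact hdisj hv1 hv
  have hsortAc : Aᶜ.sort (· ≤ ·) = l₂ := by
    rw [hAc]
    exact (List.toFinset_sort _ hnd2).mpr hs2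
  have hlistOf : listOf A = l := by
    rw [listOf, hsortA, hsortAc, hsplit]
  have hofn : ∀ (i : ℕ) (hi : i < l.length), l[i]'hi = σ ⟨i, by omega⟩ :=
    fun i hi => List.getElem_ofFn (f := ⇑σ) (i := i) (by simp only [List.length_ofFn]; omega)
  have hperm : permOf A = σ := by
    apply Equiv.ext
    intro i
    rw [permOf_apply]
    exact ((gel hlistOf rfl _).trans (hofn _ (by omega))).trans rfl
  refine ⟨A, ⟨?_, ?_⟩, hperm⟩
  · -- Fin.last K ∈ A
    by_contra hnotin
    have hinc : Fin.last K ∈ Aᶜ := Finset.mem_compl.mpr hnotin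
    have hAcne : Aᶜ.Nonempty := ⟨_, hinc⟩
    have hmaxc : Aᶜ.max' hAcne = Fin.last K :=
      le_antisymm (Fin.le_last _) (Finset.le_max' _ _ hinc)
    have hlast : l₂[l₂.length - 1]'(by omega) = Fin.last K := by
      refine ((gel hsortAc.symm (i := l₂.length - 1)
        (j := (Finset.sort Aᶜ (· ≤ ·)).length - 1) (by rw [hsortAc]) _).trans ?_)
      exact (Finset.sorted_last_eq_max' (s := Aᶜ)).trans hmaxc
    have hKidx : (K : ℕ) = k + (l₂.length - 1) := by omega
    have hfin : l[(K : ℕ)]'(by omega) = Fin.last K := by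
      refine (gel rfl hKidx _).trans ?_
      exact (List.getElem_drop' (xs := l) (by omega)).trans hlast
    rw [hofn K (by omega)] at hfin
    apply hσK
    have h9 : (⟨(K : ℕ), by omega⟩ : Fin (K+1)) = Fin.last K := rfl
    rw [h9] at hfin
    rw [hfin]
    simp
  · -- 0 ∉ A
    intro h0in
    have hAne : A.Nonempty := ⟨_, h0in⟩
    have hminA : A.min' hAne = 0 := le_antisymm (Finset.min'_le _ _ h0in) (Fin.zero_le _)
    have hhead : l₁[0]'(by omega) = (0 : Fin (K+1)) := by
      refine ((gel hsortA.symm (i := 0) (j := 0) rfl _).trans ?_)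
      exact (Finset.sorted_zero_eq_min' (s := A)).trans hminA
    have htake : l₁[0]'(by omega) = l[0]'(by rw [hlen]; omega) :=
      List.getElem_take (xs := l) (j := k) (i := 0) (h := by show (0:ℕ) < l₁.length; omega)
    have hfin : l[0]'(by omega) = (0 : Fin (K+1)) := htake.symm.trans hhead
    rw [hofn 0 (by omega)] at hfin
    apply hσ0
    have h9 : (⟨0, by omega⟩ : Fin (K+1)) = 0 := by
      apply Fin.ext
      simp
    rw [h9] at hfin
    rw [hfin]
    rfl

end main3

theorem stmt3 (K : ℕ) (hK : 2 ≤ K) :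
    (Finset.univ.filter (fun σ : Equiv.Perm (Fin (K + 1)) =>
        descents (permToList σ) = 1 ∧ (permToList σ).getD 0 0 ≠ 1 ∧
          (permToList σ).getD K 0 ≠ K + 1)).card = 2 ^ (K - 1) := by
  classical
  set t := Finset.univ.filter (fun σ : Equiv.Perm (Fin (K + 1)) =>
      descents (permToList σ) = 1 ∧ (permToList σ).getD 0 0 ≠ 1 ∧
        (permToList σ).getD K 0 ≠ K + 1) with ht
  set family : Finset (Finset (Fin (K+1))) :=
    Finset.univ.filter (fun A => Fin.last K ∈ A ∧ (0 : Fin (K+1)) ∉ A) with hfam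
  have h1 : family.card = t.card := by
    apply Finset.card_bij (fun A _ => permOf A)
    · intro A hA
      rw [hfam, Finset.mem_filter] at hA
      rw [ht, Finset.mem_filter]
      exact ⟨Finset.mem_univ _, mapsInto hK A hA.2.1 hA.2.2⟩
    · intro A hA A' hA' h
      rw [hfam, Finset.mem_filter] at hA hA'
      exact permOf_inj hA.2.1 hA'.2.1 h
    · intro σ hσ
      rw [ht, Finset.mem_filter] at hσ
      obtain ⟨A, hA, hperm⟩ := permOf_surj σ hσ.2.1 hσ.2.2.1 hσ.2.2.2
      exact ⟨A, by rw [hfam, Finset.mem_filter]; exact ⟨Finset.mem_univ _, hA⟩, hperm⟩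
  set M : Finset (Fin (K+1)) :=
    (Finset.univ.erase (0 : Fin (K+1))).erase (Fin.last K) with hM
  have hlast0 : Fin.last K ≠ (0 : Fin (K+1)) := by
    intro h
    have := congrArg Fin.val h
    simp at this
    omega
  have hMcard : M.card = K - 1 := by
    rw [hM, Finset.card_erase_of_mem (Finset.mem_erase.mpr ⟨hlast0, Finset.mem_univ _⟩),
      Finset.card_erase_of_mem (Finset.mem_univ _)]
    simp
  have h2 : M.powerset.card = family.card := by
    apply Finset.card_bij (fun B _ => insert (Fin.last K) B)
    · intro B hB
      rw [Finset.mem_powerset] at hB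
      rw [hfam, Finset.mem_filter]
      refine ⟨Finset.mem_univ _, Finset.mem_insert_self _ _, ?_⟩
      intro h0
      rcases Finset.mem_insert.mp h0 with h | h
      · exact hlast0 h.symm
      · have := hB h
        rw [hM, Finset.mem_erase, Finset.mem_erase] at this
        exact this.2.1 rfl
    · intro B hB B' hB' h
      rw [Finset.mem_powerset] at hB hB'
      have hnB : Fin.last K ∉ B := fun h' => by
        have := hB h'
        rw [hM, Finset.mem_erase] at this
        exact this.1 rfl
      have hnB' : Fin.last K ∉ B' := fun h' => by
        have := hB' h'
        rw [hM, Finset.mem_erase] at this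
        exact this.1 rfl
      rw [← Finset.erase_insert hnB, ← Finset.erase_insert hnB', h]
    · intro A hA
      rw [hfam, Finset.mem_filter] at hA
      refine ⟨A.erase (Fin.last K), ?_, Finset.insert_erase hA.2.1⟩
      rw [Finset.mem_powerset]
      intro v hv
      rw [Finset.mem_erase] at hv
      rw [hM, Finset.mem_erase, Finset.mem_erase]
      refine ⟨hv.1, ?_, Finset.mem_univ _⟩
      intro h0
      rw [h0] at hv
      exact hA.2.2 hv.2
  rw [← h1, ← h2, Finset.card_powerset, hMcard]
end

section
/- If a permutation σ has d ≥ 1 descents and is minimal with respect to pattern containment among permutations with d descents (i.e., every strict pattern of σ has fewer than d descents), then σ has no two consecutive ascents, and consequently σ has size at most 2d. -/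
def IsPermList (n : ℕ) (l : List ℕ) : Prop :=
  l.Perm (List.range' 1 n)
def OrderIsoList (a b : List ℕ) : Prop :=
  a.length = b.length ∧
    ∀ i j, i < j → j < a.length → (a.getD i 0 < a.getD j 0 ↔ b.getD i 0 < b.getD j 0)

def IsPattern (π σ : List ℕ) : Prop :=
  ∃ s, s.Sublist σ ∧ OrderIsoList π s

namespace Stmt5Aux

lemma descents_cons2 (a b : ℕ) (t : List ℕ) :
    descents (a :: b :: t) = descents (b :: t) + (if b < a then 1 else 0) := by
  simp [descents, List.countP_cons]

lemma descents_cons (a : ℕ) (t : List ℕ) (ht : t ≠ []) :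
    descents (a :: t) = descents t + (if t.headD 0 < a then 1 else 0) := by
  cases t with
  | nil => exact absurd rfl ht
  | cons b t => rw [descents_cons2]; rfl

lemma headD_append_cons (u : List ℕ) (x y : ℕ) (v : List ℕ) :
    (u ++ x :: v).headD y = (u ++ [x]).headD y := by
  cases u <;> rfl

lemma descents_append_cons (u : List ℕ) (x : ℕ) (v : List ℕ) :
    descents (u ++ x :: v) = descents (u ++ [x]) + descents (x :: v) := by
  induction u with
  | nil => simp [descents]
  | cons a u ih =>
    rw [List.cons_append, List.cons_append,
      descents_cons a (u ++ x :: v) (by simp),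
      descents_cons a (u ++ [x]) (by simp), ih,
      headD_append_cons]
    omega

lemma descents_pair (x y : ℕ) : descents [x, y] = if y < x then 1 else 0 := by
  simp [descents, List.countP_cons]

lemma descents_eq_range (l : List ℕ) :
    descents l = (List.range (l.length - 1)).countP
      (fun i => decide (l.getD (i+1) 0 < l.getD i 0)) := by
  induction l with
  | nil => simp [descents]
  | cons a t ih =>
    cases t with
    | nil => simp [descents]
    | cons b t =>
      rw [descents_cons2, ih]
      simp only [List.length_cons, Nat.add_sub_cancel, List.range_succ_eq_map,
        List.countP_cons, List.countP_map]
      simp [Function.comp_def, List.getD_cons_succ, List.getD_cons_zero]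

def rnk (l : List ℕ) (x : ℕ) : ℕ := 1 + l.countP (fun z => decide (z < x))
def std (l : List ℕ) : List ℕ := l.map (rnk l)

lemma rnk_lt_rnk {l : List ℕ} {x y : ℕ} (hx : x ∈ l) (hxy : x < y) :
    rnk l x < rnk l y := by
  obtain ⟨u, v, rfl⟩ := List.append_of_mem hx
  have h1 : List.countP (fun z => decide (z < x)) u ≤ List.countP (fun z => decide (z < y)) u :=
    List.countP_mono_left (fun z _ hz => by simp at hz ⊢; omega)
  have h2 : List.countP (fun z => decide (z < x)) v ≤ List.countP (fun z => decide (z < y)) v :=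
    List.countP_mono_left (fun z _ hz => by simp at hz ⊢; omega)
  simp [rnk, List.countP_append, List.countP_cons, hxy]
  omega

lemma rnk_le {l : List ℕ} {x : ℕ} (hx : x ∈ l) : rnk l x ≤ l.length := by
  obtain ⟨u, v, rfl⟩ := List.append_of_mem hx
  have h1 := List.countP_le_length (p := fun z => decide (z < x)) (l := u)
  have h2 := List.countP_le_length (p := fun z => decide (z < x)) (l := v)
  simp [rnk, List.countP_append, List.countP_cons]
  omega

lemma rnk_lt_iff {l : List ℕ} {x y : ℕ} (hx : x ∈ l) (hy : y ∈ l) :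
    rnk l x < rnk l y ↔ x < y := by
  constructor
  · intro h
    by_contra hn
    rcases Nat.lt_or_ge y x with h' | h'
    · exact absurd (rnk_lt_rnk hy h') (by omega)
    · have hxy : x = y := by omega
      subst hxy; omega
  · exact fun h => rnk_lt_rnk hx h

lemma std_nodup {l : List ℕ} (hl : l.Nodup) : (std l).Nodup := by
  refine List.Nodup.map_on ?_ hl
  intro x hx y hy hxy
  by_contra hne
  rcases Nat.lt_or_ge x y with h | h
  · exact absurd (rnk_lt_rnk hx h) (by omega)
  · have hlt : y < x := by omega
    exact absurd (rnk_lt_rnk hy hlt) (by omega)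

lemma std_perm {l : List ℕ} (hl : l.Nodup) : IsPermList l.length (std l) := by
  have hnd := std_nodup hl
  have hsub : (std l).toFinset ⊆ (List.range' 1 l.length).toFinset := by
    intro x hx
    simp only [List.mem_toFinset] at hx ⊢
    obtain ⟨y, hy, rfl⟩ := List.mem_map.1 hx
    have h1 := rnk_le hy
    have h2 : 1 ≤ rnk l y := by simp [rnk]
    rw [List.mem_range']
    refine ⟨rnk l y - 1, by omega, by omega⟩
  have hcard : ((List.range' 1 l.length).toFinset).card ≤ ((std l).toFinset).card := by
    rw [List.toFinset_card_of_nodup hnd, List.toFinset_card_of_nodup (List.nodup_range')]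
    simp [std]
  have heq : (std l).toFinset = (List.range' 1 l.length).toFinset :=
    Finset.eq_of_subset_of_card_le hsub hcard
  rw [IsPermList]
  have hp := List.toFinset_eq_iff_perm_dedup.1 heq
  rwa [List.Nodup.dedup hnd, List.Nodup.dedup (List.nodup_range')] at hp

lemma std_orderIso (l : List ℕ) : OrderIsoList (std l) l := by
  refine ⟨by simp [std], ?_⟩
  intro i j hij hj
  have hj' : j < l.length := by simpa [std] using hj
  have hi' : i < l.length := lt_trans hij hj'
  rw [List.getD_eq_getElem _ _ hj, List.getD_eq_getElem _ _ (lt_trans hij hj),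
    List.getD_eq_getElem _ _ hj', List.getD_eq_getElem _ _ hi']
  simp only [std, List.getElem_map]
  exact rnk_lt_iff (List.getElem_mem _) (List.getElem_mem _)

lemma descents_congr {a b : List ℕ} (h : OrderIsoList a b) (ha : a.Nodup) (hb : b.Nodup) :
    descents a = descents b := by
  rw [descents_eq_range, descents_eq_range, h.1]
  apply List.countP_congr
  intro i hi
  simp only [List.mem_range] at hi
  have hj' : i + 1 < b.length := by omega
  have hj : i + 1 < a.length := by rw [h.1]; omega
  have hi' : i < b.length := by omega
  have hia : i < a.length := by omega
  have hlt := h.2 i (i+1) (by omega) hj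
  rw [List.getD_eq_getElem _ _ hj, List.getD_eq_getElem _ _ hia] at hlt
  rw [List.getD_eq_getElem _ _ hj', List.getD_eq_getElem _ _ hi'] at hlt
  have hna : a[i] ≠ a[i+1] := fun hh => by
    have := (ha.getElem_inj_iff).1 hh; omega
  have hnb : b[i] ≠ b[i+1] := fun hh => by
    have := (hb.getElem_inj_iff).1 hh; omega
  rw [List.getD_eq_getElem _ _ hj, List.getD_eq_getElem _ _ hia,
    List.getD_eq_getElem _ _ hj', List.getD_eq_getElem _ _ hi']
  simp only [decide_eq_true_eq]
  omega

lemma countP_range_eq (n : ℕ) (p : ℕ → Bool) :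
    ((Finset.range n).filter (fun i => p i)).card = (List.range n).countP p := by
  show Multiset.card (Multiset.filter _ (Multiset.range n)) = _
  rw [Multiset.range, Multiset.filter_coe, Multiset.coe_card, List.countP_eq_length_filter]
  simp

end Stmt5Aux

open Stmt5Aux in
theorem stmt5 (n d : ℕ) (hd : 1 ≤ d) (l : List ℕ) (h : IsPermList n l)
    (hdesc : descents l = d)
    (hmin : ∀ m π, IsPermList m π → IsPattern π l → π.length < l.length → descents π < d) :
    (¬ ∃ i, i + 2 < l.length ∧ l.getD i 0 < l.getD (i + 1) 0 ∧
        l.getD (i + 1) 0 < l.getD (i + 2) 0) ∧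
      l.length ≤ 2 * d := by
  have hnd : l.Nodup := (List.Perm.nodup_iff h).2 (List.nodup_range')
  -- the key minimality consequence for sublists
  have key : ∀ l' : List ℕ, l'.Sublist l → l'.length < l.length → descents l' < d := by
    intro l' hs hlen
    have hnd' : l'.Nodup := hs.nodup hnd
    have hpat : IsPattern (std l') l := ⟨l', hs, std_orderIso l'⟩
    have hm := hmin l'.length (std l') (std_perm hnd') hpat (by simpa [std] using hlen)
    rwa [descents_congr (std_orderIso l') (std_nodup hnd') hnd'] at hm
  set N := l.length with hN
  -- no two consecutive ascents
  have part1 : ¬ ∃ i, i + 2 < l.length ∧ l.getD i 0 < l.getD (i + 1) 0 ∧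
      l.getD (i + 1) 0 < l.getD (i + 2) 0 := by
    rintro ⟨i, hi2, h01, h12⟩
    have hi : i < l.length := by omega
    have hi1 : i + 1 < l.length := by omega
    rw [List.getD_eq_getElem _ _ hi, List.getD_eq_getElem _ _ hi1] at h01
    rw [List.getD_eq_getElem _ _ hi1, List.getD_eq_getElem _ _ hi2] at h12
    have hdec : l = l.take i ++ l[i] :: l[i+1] :: l[i+2] :: l.drop (i+3) := by
      conv_lhs => rw [← List.take_append_drop i l]
      rw [List.drop_eq_getElem_cons hi, List.drop_eq_getElem_cons hi1,
        List.drop_eq_getElem_cons hi2]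
    set u := l.take i
    set x := l[i]
    set y := l[i+1]
    set z := l[i+2]
    set v := l.drop (i+3)
    have hsub : (u ++ x :: z :: v).Sublist l := by
      rw [hdec]
      exact List.Sublist.append_left
        (List.Sublist.cons₂ x (List.Sublist.cons y (List.Sublist.refl _))) u
    have hlen : (u ++ x :: z :: v).length < l.length := by
      rw [hdec]; simp
    have hlt := key _ hsub hlen
    have e1 : descents (u ++ x :: z :: v) = descents (u ++ [x]) + descents (x :: z :: v) :=
      descents_append_cons u x (z :: v)
    have e2 : descents l = descents (u ++ [x]) + descents (x :: y :: z :: v) := by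
      rw [hdec]; exact descents_append_cons u x (y :: z :: v)
    rw [descents_cons2, descents_cons2, if_neg (by omega), if_neg (by omega)] at e2
    rw [descents_cons2, if_neg (by omega)] at e1
    omega
  refine ⟨part1, ?_⟩
  rcases Nat.lt_or_ge N 2 with hN2 | hN2
  · omega
  -- N ≥ 2
  -- first position is a descent
  have hfirst : l.getD 1 0 < l.getD 0 0 := by
    by_contra hc
    have h0 : 0 < l.length := by omega
    have h1 : 1 < l.length := by omega
    rw [List.getD_eq_getElem _ _ h1, List.getD_eq_getElem _ _ h0] at hc
    have hne : l[0] ≠ l[1] := fun hh => by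
      have := (hnd.getElem_inj_iff).1 hh; omega
    have hasc : l[0] < l[1] := by omega
    have hdec : l = l[0] :: l[1] :: l.drop 2 := by
      conv_lhs => rw [← List.take_append_drop 0 l]
      rw [List.drop_eq_getElem_cons h0, List.drop_eq_getElem_cons h1]
      simp
    have hsub : (l[1] :: l.drop 2).Sublist l := by
      conv_rhs => rw [hdec]
      exact List.Sublist.cons _ (List.Sublist.refl _)
    have hlen : (l[1] :: l.drop 2).length < l.length := by
      conv_rhs => rw [hdec]
      simp
    have hlt := key _ hsub hlen
    have e : descents l = descents (l[1] :: l.drop 2) + (if l[1] < l[0] then 1 else 0) := by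
      conv_lhs => rw [hdec]
      exact descents_cons2 _ _ _
    rw [if_neg (by omega)] at e
    omega
  -- last position is a descent
  have hlast : l.getD (N-1) 0 < l.getD (N-2) 0 := by
    by_contra hc
    have h2 : N - 2 < l.length := by omega
    have h1 : N - 1 < l.length := by omega
    have hss : N - 2 + 1 = N - 1 := by omega
    rw [List.getD_eq_getElem _ _ h1, List.getD_eq_getElem _ _ h2] at hc
    have hne : l[N-2] ≠ l[N-1] := fun hh => by
      have := (hnd.getElem_inj_iff).1 hh; omega
    have hasc : l[N-2] < l[N-1] := by omega
    have hdec : l = l.take (N-2) ++ l[N-2] :: l[N-1] :: l.drop N := by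
      conv_lhs => rw [← List.take_append_drop (N-2) l]
      rw [List.drop_eq_getElem_cons h2, hss, List.drop_eq_getElem_cons h1,
        show N - 1 + 1 = N by omega]
    have hdropN : l.drop N = [] := by simp [hN]
    rw [hdropN] at hdec
    have hsub : (l.take (N-2) ++ [l[N-2]]).Sublist l := by
      conv_rhs => rw [hdec]
      exact List.Sublist.append_left
        (List.Sublist.cons₂ _ (List.nil_sublist _)) _
    have hlen : (l.take (N-2) ++ [l[N-2]]).length < l.length := by
      conv_rhs => rw [hdec]
      simp
      omega
    have hlt := key _ hsub hlen
    have e : descents l = descents (l.take (N-2) ++ [l[N-2]]) +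
        descents [l[N-2], l[N-1]] := by
      conv_lhs => rw [hdec]
      exact descents_append_cons _ _ _
    rw [descents_pair, if_neg (by omega)] at e
    omega
  -- counting
  have hdN : d = ((Finset.range (N-1)).filter
      (fun i => decide (l.getD (i+1) 0 < l.getD i 0) = true)).card := by
    rw [countP_range_eq, ← descents_eq_range, hdesc]
  set D := (Finset.range (N-1)).filter
      (fun i => decide (l.getD (i+1) 0 < l.getD i 0) = true) with hD
  set A := (Finset.range (N-1)).filter
      (fun i => ¬ decide (l.getD (i+1) 0 < l.getD i 0) = true) with hA
  have hsum : D.card + A.card = N - 1 := by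
    rw [hD, hA]
    rw [Finset.card_filter_add_card_filter_not, Finset.card_range]
  have hzero : (0 : ℕ) ∈ D := by
    rw [hD]
    simp only [Finset.mem_filter, Finset.mem_range, decide_eq_true_eq]
    exact ⟨by omega, hfirst⟩
  have hmap : ∀ i ∈ A, i + 1 ∈ D.erase 0 := by
    intro i hiA
    rw [hA] at hiA
    simp only [Finset.mem_filter, Finset.mem_range, decide_eq_true_eq] at hiA
    obtain ⟨hilt, hnotdesc⟩ := hiA
    have hi : i < l.length := by omega
    have hi1 : i + 1 < l.length := by omega
    have hne : l[i] ≠ l[i+1] := fun hh => by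
      have := (hnd.getElem_inj_iff).1 hh; omega
    have hasc : l.getD i 0 < l.getD (i+1) 0 := by
      rw [List.getD_eq_getElem _ _ hi, List.getD_eq_getElem _ _ hi1]
      rw [List.getD_eq_getElem _ _ hi, List.getD_eq_getElem _ _ hi1] at hnotdesc
      omega
    -- i+1 < N-1, i.e. i ≠ N-2
    have hi1lt : i + 1 < N - 1 := by
      by_contra hcon
      have hieq : i = N - 2 := by omega
      subst hieq
      rw [show N - 2 + 1 = N - 1 by omega] at hasc
      omega
    -- position i+1 is a descent
    have hdesc1 : l.getD (i+2) 0 < l.getD (i+1) 0 := by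
      by_contra hcon
      have hi2 : i + 2 < l.length := by omega
      have hne2 : l[i+1] ≠ l[i+2] := fun hh => by
        have := (hnd.getElem_inj_iff).1 hh; omega
      have hasc2 : l.getD (i+1) 0 < l.getD (i+2) 0 := by
        rw [List.getD_eq_getElem _ _ hi1, List.getD_eq_getElem _ _ hi2]
        rw [List.getD_eq_getElem _ _ hi2, List.getD_eq_getElem _ _ hi1] at hcon
        omega
      exact part1 ⟨i, hi2, hasc, hasc2⟩
    rw [Finset.mem_erase, hD]
    simp only [Finset.mem_filter, Finset.mem_range, decide_eq_true_eq]
    exact ⟨by omega, by omega, hdesc1⟩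
  have hcardA : A.card ≤ (D.erase 0).card := by
    apply Finset.card_le_card_of_injOn (fun i => i + 1) hmap
    intro a _ b _ hab
    exact Nat.add_right_cancel hab
  rw [Finset.card_erase_of_mem hzero] at hcardA
  have hDpos : 1 ≤ D.card := Finset.card_pos.2 ⟨0, hzero⟩
  omega
end

section
/- For every d ≥ 1 and p ≥ 0, the set of minimal permutations (under pattern containment) with exactly 2^p descents is finite; more generally, for any d the set of pattern-minimal permutations with exactly d descents is finite, all having size at most 2d. -/
def MinPerms (d : ℕ) : Set (List ℕ) :=
  {l | ∃ n, IsPermList n l ∧ descents l = d ∧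
    ∀ m π, IsPermList m π → IsPattern π l → π.length < l.length → descents π < d}

lemma descents_singleton (x : ℕ) : descents [x] = 0 := rfl

lemma key_erase : ∀ N (l : List ℕ), l.length ≤ N → 2 ≤ l.length →
    2 * descents l < l.length →
    ∃ i < l.length, descents (l.eraseIdx i) = descents l ∧
      (i = 0 → l.getD 0 0 ≤ l.getD 1 0) := by
  intro N
  induction N with
  | zero => intro l hN h2 _; omega
  | succ N ih =>
    rintro (_ | ⟨a, _ | ⟨b, t⟩⟩) hN h2 hd
    · simp at h2
    · simp at h2
    · by_cases hab : a ≤ b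
      · refine ⟨0, by simp, ?_, fun _ => by simpa using hab⟩
        rw [List.eraseIdx_cons_zero, descents_cons_cons, if_neg (by omega)]
        omega
      · push_neg at hab   -- b < a
        rw [descents_cons_cons, if_pos hab] at hd
        match t with
        | [] =>
          exfalso
          have : descents [b] = 0 := rfl
          simp [this] at hd
        | c :: t' =>
          by_cases hbc : b ≤ c
          · -- ascent b ≤ c
            match t' with
            | [] =>
              -- l = [a,b,c], remove index 2 (the c)
              refine ⟨2, by simp, ?_, by simp⟩
              show descents [a, b] = descents [a, b, c]
              have h3 : ¬ c < b := by omega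
              simp [descents_cons_cons, descents_singleton, h3, hab]
            | e :: t'' =>
              have hbcd : descents (b :: c :: e :: t'') = descents (c :: e :: t'') := by
                rw [descents_cons_cons, if_neg (by omega)]
                omega
              have hinv : 2 * descents (c :: e :: t'') < (c :: e :: t'').length := by
                rw [hbcd] at hd
                simp only [List.length_cons] at hd ⊢
                omega
              obtain ⟨i, hi, hdesc, hcl⟩ := ih (c :: e :: t'')
                (by simp at hN ⊢; omega) (by simp) hinv
              match i with
              | 0 =>
                have hce : c ≤ e := by simpa using hcl rfl
                refine ⟨2, by simp, ?_, by simp⟩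
                show descents (a :: b :: e :: t'') = descents (a :: b :: c :: e :: t'')
                have h1 : ¬ e < b := by omega
                have h2 : ¬ e < c := by omega
                have h3 : ¬ c < b := by omega
                simp [descents_cons_cons, h1, h2, h3, hab]
              | j + 1 =>
                refine ⟨j + 3, by simp at hi ⊢; omega, ?_, by simp⟩
                have he : (a :: b :: c :: e :: t'').eraseIdx (j + 3)
                    = a :: b :: ((c :: e :: t'').eraseIdx (j + 1)) := rfl
                have he2 : (c :: e :: t'').eraseIdx (j + 1)
                    = c :: ((e :: t'').eraseIdx j) := rfl
                rw [he, he2,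
                  descents_cons_cons a b (c :: (e :: t'').eraseIdx j),
                  descents_cons_cons b c ((e :: t'').eraseIdx j),
                  descents_cons_cons a b (c :: e :: t''),
                  descents_cons_cons b c (e :: t''), ← he2, hdesc]
          · -- descent at (b, c); recurse on b :: c :: t'
            push_neg at hbc   -- c < b
            have hinv : 2 * descents (b :: c :: t') < (b :: c :: t').length := by
              simp only [List.length_cons] at hd ⊢
              omega
            obtain ⟨i, hi, hdesc, hcl⟩ := ih (b :: c :: t')
              (by simp at hN ⊢; omega) (by simp) hinv
            match i with
            | 0 =>
              exfalso
              have := hcl rfl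
              simp at this
              omega
            | j + 1 =>
              refine ⟨j + 2, by simp at hi ⊢; omega, ?_, by simp⟩
              have he : (a :: b :: c :: t').eraseIdx (j + 2)
                  = a :: ((b :: c :: t').eraseIdx (j + 1)) := rfl
              have he2 : (b :: c :: t').eraseIdx (j + 1)
                  = b :: ((c :: t').eraseIdx j) := rfl
              rw [he, he2,
                descents_cons_cons a b ((c :: t').eraseIdx j),
                descents_cons_cons a b (c :: t'), ← he2, hdesc]

def rk (s : List ℕ) (x : ℕ) : ℕ := s.countP (fun z => decide (z ≤ x))

lemma countP_lt_countP (p q : ℕ → Bool) (y : ℕ) (hq : q y = true) (hp : p y ≠ true) :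
    ∀ s : List ℕ, y ∈ s → (∀ z ∈ s, p z = true → q z = true) →
      s.countP p < s.countP q := by
  intro s
  induction s with
  | nil => intro h; simp at h
  | cons a s ih =>
    intro hy h
    rw [List.countP_cons, List.countP_cons]
    rcases List.mem_cons.1 hy with rfl | hy'
    · have hm := List.countP_mono_left (p := p) (q := q) (l := s)
        (fun z hz hpz => h z (List.mem_cons_of_mem _ hz) hpz)
      rw [if_pos hq, if_neg hp]
      omega
    · have hlt := ih hy' (fun z hz => h z (List.mem_cons_of_mem _ hz))
      have hpq : p a = true → q a = true := h a List.mem_cons_self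
      by_cases hpa : p a = true
      · rw [if_pos hpa, if_pos (hpq hpa)]; omega
      · rw [if_neg hpa]; split <;> omega

lemma rk_lt_iff {s : List ℕ} {x y : ℕ} (hx : x ∈ s) (hy : y ∈ s) :
    rk s x < rk s y ↔ x < y := by
  constructor
  · intro h
    by_contra hxy
    push_neg at hxy
    have : rk s y ≤ rk s x := List.countP_mono_left (fun z _ hz => by
      simp only [decide_eq_true_eq] at hz ⊢; omega)
    omega
  · intro h
    exact countP_lt_countP _ _ y (by simp) (by simp; omega) s hy
      (fun z _ hz => by simp only [decide_eq_true_eq] at hz ⊢; omega)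

lemma descents_map {s : List ℕ} {f : ℕ → ℕ}
    (h : ∀ x ∈ s, ∀ y ∈ s, (f y < f x ↔ y < x)) :
    descents (s.map f) = descents s := by
  unfold descents
  rw [← List.map_tail, List.zip_map, List.countP_map]
  apply List.countP_congr
  rintro ⟨x, y⟩ hp
  obtain ⟨h1, h2⟩ := List.of_mem_zip hp
  simp only [Function.comp_apply, Prod.map_apply]
  simpa using h x h1 y (List.mem_of_mem_tail h2)

lemma std_perm {s : List ℕ} (hs : s.Nodup) :
    (s.map (rk s)).Perm (List.range' 1 s.length) := by
  apply List.Subperm.perm_of_length_le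
  · apply List.subperm_of_subset
    · apply hs.map_on
      intro x hx y hy hxy
      by_contra hne
      rcases Nat.lt_or_ge x y with hlt | hge
      · have := (rk_lt_iff hx hy).2 hlt; omega
      · have hlt : y < x := by omega
        have := (rk_lt_iff hy hx).2 hlt; omega
    · intro v hv
      simp only [List.mem_map] at hv
      obtain ⟨x, hx, rfl⟩ := hv
      rw [List.mem_range'_1]
      constructor
      · have : 0 < rk s x := List.countP_pos_iff.2 ⟨x, hx, by simp⟩
        omega
      · have := List.countP_le_length (l := s) (p := fun z => decide (z ≤ x))
        unfold rk
        omega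
  · simp

lemma std_orderIso (s : List ℕ) : OrderIsoList (s.map (rk s)) s := by
  refine ⟨List.length_map _, fun i j hij hj => ?_⟩
  rw [List.length_map] at hj
  have hi : i < s.length := lt_trans hij hj
  rw [List.getD_eq_getElem _ _ (by simpa using hi), List.getD_eq_getElem _ _ (by simpa using hj),
      List.getD_eq_getElem _ _ hi, List.getD_eq_getElem _ _ hj,
      List.getElem_map, List.getElem_map]
  exact rk_lt_iff (s.getElem_mem _) (s.getElem_mem _)

lemma minPerms_length {d : ℕ} (hd : 1 ≤ d) {l : List ℕ} (hl : l ∈ MinPerms d) :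
    l.length ≤ 2 * d := by
  obtain ⟨n, hperm, hdes, hmin⟩ := hl
  by_contra hlen
  push_neg at hlen
  obtain ⟨i, hi, hdi, -⟩ := key_erase l.length l le_rfl (by omega) (by omega)
  set s := l.eraseIdx i with hs
  have hsub : s.Sublist l := List.eraseIdx_sublist l i
  have hslen : s.length = l.length - 1 := by
    rw [hs, List.length_eraseIdx, if_pos hi]
  have hnodup : l.Nodup := hperm.nodup_iff.2 (List.nodup_range' (s := 1) (n := n))
  have hsnd : s.Nodup := hnodup.sublist hsub
  have hio : ∀ x ∈ s, ∀ y ∈ s, (rk s y < rk s x ↔ y < x) :=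
    fun x hx y hy => rk_lt_iff hy hx
  have hlt := hmin s.length (s.map (rk s)) (std_perm hsnd)
    ⟨s, hsub, std_orderIso s⟩ (by rw [List.length_map]; omega)
  rw [descents_map hio, hdi, hdes] at hlt
  omega

theorem stmt6 (d : ℕ) (hd : 1 ≤ d) :
    (MinPerms d).Finite ∧ ∀ l ∈ MinPerms d, l.length ≤ 2 * d := by
  have hbound : ∀ l ∈ MinPerms d, l.length ≤ 2 * d := fun l hl => minPerms_length hd hl
  refine ⟨?_, hbound⟩
  have hsub : MinPerms d ⊆
      ⋃ n ∈ Set.Iic (2 * d), {l : List ℕ | l ∈ (List.range' 1 n).permutations} := by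
    intro l hl
    obtain ⟨n, hperm, -, -⟩ := id hl
    have hn : l.length = n := by rw [hperm.length_eq, List.length_range']
    have hb := hbound l hl
    simp only [Set.mem_iUnion, Set.mem_Iic, Set.mem_setOf_eq]
    exact ⟨n, by omega, List.mem_permutations.2 hperm⟩
  exact Set.Finite.subset ((Set.finite_Iic (2 * d)).biUnion
    (fun n _ => (List.range' 1 n).permutations.finite_toSet)) hsub
end

section
/- If a permutation σ can be obtained from the identity permutation by at most p duplication-loss steps of width at most K, and π is a pattern of σ, then π can be obtained from the identity permutation (of the appropriate size) by at most p duplication-loss steps of width at most K. -/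
inductive Interleave : List ℕ → List ℕ → List ℕ → Prop
  | nil : Interleave [] [] []
  | left {x : ℕ} {l a b : List ℕ} : Interleave l a b → Interleave (x :: l) (x :: a) b
  | right {x : ℕ} {l a b : List ℕ} : Interleave l a b → Interleave (x :: l) a (x :: b)

def DLStep (K : ℕ) (τ σ : List ℕ) : Prop :=
  ∃ pre w post w1 w2 : List ℕ, τ = pre ++ w ++ post ∧ w.length ≤ K ∧
    Interleave w w1 w2 ∧ σ = pre ++ (w1 ++ w2) ++ post

def DLIter (K : ℕ) : ℕ → List ℕ → List ℕ → Prop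
  | 0, τ, σ => τ = σ
  | p + 1, τ, σ => ∃ μ, DLStep K τ μ ∧ DLIter K p μ σ

def ObtainableIn (K p : ℕ) (τ σ : List ℕ) : Prop :=
  ∃ q ≤ p, DLIter K q τ σ

lemma interleave_perm {l a b : List ℕ} (h : Interleave l a b) : l.Perm (a ++ b) := by
  induction h with
  | nil => simp
  | left h ih => exact ih.cons _
  | right h ih => exact (ih.cons _).trans List.perm_middle.symm

lemma interleave_map (f : ℕ → ℕ) {l a b : List ℕ} (h : Interleave l a b) :
    Interleave (l.map f) (a.map f) (b.map f) := by
  induction h with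
  | nil => exact .nil
  | left h ih => exact .left ih
  | right h ih => exact .right ih

lemma interleave_sublist {w w1 w2 : List ℕ} (h : Interleave w w1 w2) :
    ∀ {u1 u2 : List ℕ}, u1.Sublist w1 → u2.Sublist w2 →
      ∃ u, u.Sublist w ∧ Interleave u u1 u2 := by
  induction h with
  | nil =>
    intro u1 u2 h1 h2
    rw [List.sublist_nil] at h1 h2; subst h1; subst h2
    exact ⟨[], List.Sublist.refl _, .nil⟩
  | @left x l a b h ih =>
    intro u1 u2 h1 h2
    cases h1 with
    | cons _ h1' =>
      obtain ⟨u, hu, hi⟩ := ih h1' h2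
      exact ⟨u, hu.cons _, hi⟩
    | cons_cons _ h1' =>
      obtain ⟨u, hu, hi⟩ := ih h1' h2
      exact ⟨x :: u, hu.cons₂ _, hi.left⟩
  | @right x l a b h ih =>
    intro u1 u2 h1 h2
    cases h2 with
    | cons _ h2' =>
      obtain ⟨u, hu, hi⟩ := ih h1 h2'
      exact ⟨u, hu.cons _, hi⟩
    | cons_cons _ h2' =>
      obtain ⟨u, hu, hi⟩ := ih h1 h2'
      exact ⟨x :: u, hu.cons₂ _, hi.right⟩

lemma dlstep_perm {K : ℕ} {τ σ : List ℕ} (h : DLStep K τ σ) : τ.Perm σ := by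
  obtain ⟨pre, w, post, w1, w2, rfl, _, hint, rfl⟩ := h
  simpa [List.append_assoc] using ((interleave_perm hint).append_right post).append_left pre

lemma dlstep_map (f : ℕ → ℕ) {K : ℕ} {τ σ : List ℕ} (h : DLStep K τ σ) :
    DLStep K (τ.map f) (σ.map f) := by
  obtain ⟨pre, w, post, w1, w2, rfl, hK, hint, rfl⟩ := h
  exact ⟨pre.map f, w.map f, post.map f, w1.map f, w2.map f, by simp,
    by simpa using hK, interleave_map f hint, by simp⟩

lemma dlstep_back {K : ℕ} {τ σ s : List ℕ} (h : DLStep K τ σ) (hs : s.Sublist σ) :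
    ∃ t, t.Sublist τ ∧ DLStep K t s := by
  obtain ⟨pre, w, post, w1, w2, rfl, hK, hint, rfl⟩ := h
  rw [List.append_assoc, List.sublist_append_iff] at hs
  obtain ⟨s1, rest, rfl, hs1, hrest⟩ := hs
  rw [List.sublist_append_iff] at hrest
  obtain ⟨s2, s3, rfl, hs2, hs3⟩ := hrest
  rw [List.sublist_append_iff] at hs2
  obtain ⟨u1, u2, rfl, hu1, hu2⟩ := hs2
  obtain ⟨u, hu, hi⟩ := interleave_sublist hint hu1 hu2
  refine ⟨s1 ++ u ++ s3, ?_, s1, u, s3, u1, u2, rfl, le_trans hu.length_le hK, hi, by simp⟩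
  rw [List.append_assoc, List.append_assoc]
  exact hs1.append (hu.append hs3)

lemma dliter_perm {K : ℕ} : ∀ {q : ℕ} {τ σ : List ℕ}, DLIter K q τ σ → τ.Perm σ := by
  intro q
  induction q with
  | zero => intro τ σ h; exact h ▸ List.Perm.refl _
  | succ q ih =>
    rintro τ σ ⟨μ, h1, h2⟩
    exact (dlstep_perm h1).trans (ih h2)

lemma dliter_map (f : ℕ → ℕ) {K : ℕ} : ∀ {q : ℕ} {τ σ : List ℕ}, DLIter K q τ σ →
    DLIter K q (τ.map f) (σ.map f) := by
  intro q
  induction q with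
  | zero => intro τ σ h; exact h ▸ rfl
  | succ q ih =>
    rintro τ σ ⟨μ, h1, h2⟩
    exact ⟨μ.map f, dlstep_map f h1, ih h2⟩

lemma dliter_back {K : ℕ} : ∀ {q : ℕ} {τ σ s : List ℕ}, DLIter K q τ σ → s.Sublist σ →
    ∃ t, t.Sublist τ ∧ DLIter K q t s := by
  intro q
  induction q with
  | zero => intro τ σ s h hs; exact ⟨s, h ▸ hs, rfl⟩
  | succ q ih =>
    rintro τ σ s ⟨μ, h1, h2⟩ hs
    obtain ⟨t', ht', hiter⟩ := ih h2 hs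
    obtain ⟨t, ht, hstep⟩ := dlstep_back h1 ht'
    exact ⟨t, ht, t', hstep, hiter⟩


lemma cnt_lt_cnt {l : List ℕ} {x y : ℕ} (hx : x ∈ l) (hxy : x < y) :
    l.countP (fun z => decide (z < x)) < l.countP (fun z => decide (z < y)) := by
  rw [List.countP_eq_length_filter, List.countP_eq_length_filter]
  have hsub : (l.filter (fun z => decide (z < x))).Sublist (l.filter (fun z => decide (z < y))) :=
    List.monotone_filter_right l (fun a ha => by simp at ha ⊢; omega)
  refine lt_of_le_of_ne hsub.length_le (fun he => ?_)
  have heq := hsub.eq_of_length he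
  have hxmem : x ∈ l.filter (fun z => decide (z < y)) := by
    simp only [List.mem_filter, decide_eq_true_eq]; exact ⟨hx, hxy⟩
  rw [← heq] at hxmem
  simp at hxmem

lemma cnt_le_cnt {l : List ℕ} {x y : ℕ} (hxy : x ≤ y) :
    l.countP (fun z => decide (z < x)) ≤ l.countP (fun z => decide (z < y)) := by
  rw [List.countP_eq_length_filter, List.countP_eq_length_filter]
  exact (List.monotone_filter_right l (fun a ha => by simp at ha ⊢; omega)).length_le

lemma rank_iff {l : List ℕ} {x y : ℕ} (hx : x ∈ l) :
    x < y ↔ l.countP (fun z => decide (z < x)) < l.countP (fun z => decide (z < y)) := by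
  constructor
  · exact cnt_lt_cnt hx
  · intro h
    by_contra hxy
    exact absurd (cnt_le_cnt (Nat.le_of_not_lt hxy)) (Nat.not_le_of_lt h)

lemma rank_inj {l : List ℕ} {x y : ℕ} (hx : x ∈ l) (hy : y ∈ l)
    (h : l.countP (fun z => decide (z < x)) = l.countP (fun z => decide (z < y))) : x = y := by
  rcases Nat.lt_trichotomy x y with hlt | heq | hgt
  · exact absurd (cnt_lt_cnt hx hlt) (by omega)
  · exact heq
  · exact absurd (cnt_lt_cnt hy hgt) (by omega)

lemma countP_eq_pos (l : List ℕ) (p : ℕ → Bool) :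
    l.countP p = ((List.range l.length).filter (fun j => p (l.getD j 0))).length := by
  induction l with
  | nil => simp
  | cons a l ih =>
    rw [List.length_cons, List.range_succ_eq_map, List.filter_cons, List.countP_cons]
    have hmf : (List.filter (fun j => p ((a :: l).getD j 0)) ((List.range l.length).map Nat.succ))
        = (List.filter (fun j => p (l.getD j 0)) (List.range l.length)).map Nat.succ := by
      rw [List.filter_map]
      rfl
    rw [hmf, ih]
    simp only [List.getD_cons_zero]
    by_cases hp : p a
    · simp only [hp, if_true, List.length_cons, List.length_map]
    · simp only [hp, Bool.false_eq_true, if_false, List.length_map, Nat.add_zero]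

lemma filter_range_lt : ∀ (L i : ℕ), i ≤ L →
    ((List.range L).filter (fun j => decide (j < i))).length = i := by
  intro L
  induction L with
  | zero => intro i hi; interval_cases i; simp
  | succ L ih =>
    intro i hi
    rw [List.range_succ, List.filter_append]
    by_cases h : i ≤ L
    · simp [ih i h, Nat.not_lt.mpr h]
    · have hi' : i = L + 1 := by omega
      subst hi'
      rw [List.filter_eq_self.mpr (by intro a ha; simp at ha ⊢; omega)]
      simp

lemma iso_all {a b : List ℕ} (h : OrderIsoList a b) (ha : a.Nodup) (hb : b.Nodup)
    {i j : ℕ} (hi : i < a.length) (hj : j < a.length) :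
    a.getD i 0 < a.getD j 0 ↔ b.getD i 0 < b.getD j 0 := by
  obtain ⟨hlen, hiso⟩ := h
  rcases Nat.lt_trichotomy i j with hij | rfl | hij
  · exact hiso i j hij hj
  · simp
  · have h1 := hiso j i hij hi
    have hane : a.getD i 0 ≠ a.getD j 0 := by
      rw [List.getD_eq_getElem _ _ hi, List.getD_eq_getElem _ _ hj]
      intro he
      exact absurd (ha.getElem_inj_iff.mp he) (by omega)
    have hbne : b.getD i 0 ≠ b.getD j 0 := by
      rw [List.getD_eq_getElem _ _ (hlen ▸ hi), List.getD_eq_getElem _ _ (hlen ▸ hj)]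
      intro he
      exact absurd (hb.getElem_inj_iff.mp he) (by omega)
    omega

theorem stmt7 (n m K p : ℕ) (σ π : List ℕ) (hσ : IsPermList n σ) (hπ : IsPermList m π)
    (hobt : ObtainableIn K p (List.range' 1 n) σ) (hpat : IsPattern π σ) :
    ObtainableIn K p (List.range' 1 m) π := by
  obtain ⟨q, hq, hiter⟩ := hobt
  obtain ⟨s, hssub, hiso⟩ := hpat
  obtain ⟨t, htsub, htiter⟩ := dliter_back hiter hssub
  have hperm_ts : t.Perm s := dliter_perm htiter
  have hm : π.length = m := hπ.length_eq.trans (by simp)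
  have hslen : s.length = m := hiso.1 ▸ hm
  have htlen : t.length = m := hperm_ts.length_eq.trans hslen
  have htsorted : List.Pairwise (· < ·) t := List.Pairwise.sublist htsub (List.pairwise_lt_range' (s := 1) (n := n))
  have htnd : t.Nodup := htsub.nodup (List.nodup_range' (s := 1) (n := n))
  have hsnd : s.Nodup := hperm_ts.nodup_iff.mp htnd
  have hπnd : π.Nodup := hπ.nodup_iff.mpr (List.nodup_range' (s := 1) (n := m))
  set f : ℕ → ℕ := fun x => t.countP (fun z => decide (z < x)) + 1 with hf
  have hcnt_t : ∀ i (hi : i < t.length), t.countP (fun z => decide (z < t[i])) = i := by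
    intro i hi
    rw [countP_eq_pos]
    have hcongr : ∀ j ∈ List.range t.length,
        (decide (t.getD j 0 < t[i])) = (decide (j < i)) := by
      intro j hj
      rw [List.mem_range] at hj
      rw [List.getD_eq_getElem _ _ hj]
      apply decide_eq_decide.mpr
      rw [show t[j] = t.get ⟨j, hj⟩ from rfl, show t[i] = t.get ⟨i, hi⟩ from rfl,
        (List.sortedLT_iff_pairwise.mpr htsorted).strictMono_get.lt_iff_lt]
      simp [Fin.lt_def]
    rw [List.filter_congr hcongr, filter_range_lt t.length i (le_of_lt hi)]
  have hmap_t : t.map f = List.range' 1 m := by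
    apply List.ext_getElem (by simp [htlen])
    intro i h1 h2
    rw [List.getElem_map, List.getElem_range']
    simp only [hf]
    rw [hcnt_t i (by simpa using h1)]
    omega
  have hmono : ∀ x ∈ t, ∀ y ∈ t, (x < y ↔ f x < f y) := by
    intro x hx y hy
    simp only [hf]
    constructor
    · intro h; have := cnt_lt_cnt hx h; omega
    · intro h; rw [rank_iff hx]; omega
  have hperm_sfπ : (s.map f).Perm π := by
    have h1 : (s.map f).Perm (t.map f) := (hperm_ts.symm).map f
    rw [hmap_t] at h1
    exact h1.trans hπ.symm
  have hfinal : s.map f = π := by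
    apply List.ext_getElem (by simp [hslen, hm])
    intro i h1 h2
    rw [List.getElem_map]
    have his : i < s.length := by simpa using h1
    have hiπ : i < π.length := h2
    have hsit : s[i] ∈ t := hperm_ts.mem_iff.mpr (List.getElem_mem his)
    have hchain : π.countP (fun z => decide (z < π[i])) =
        π.countP (fun z => decide (z < f s[i])) := by
      rw [countP_eq_pos]
      have hstep1 : ∀ j ∈ List.range π.length,
          (decide (π.getD j 0 < π[i])) = (decide (s.getD j 0 < s.getD i 0)) := by
        intro j hj
        rw [List.mem_range] at hj
        apply decide_eq_decide.mpr
        rw [show π[i] = π.getD i 0 from (List.getD_eq_getElem _ _ hiπ).symm]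
        exact iso_all ⟨hiso.1, hiso.2⟩ hπnd hsnd hj hiπ
      rw [List.filter_congr hstep1]
      have hlen_eq : π.length = s.length := hiso.1
      rw [hlen_eq]
      rw [← countP_eq_pos s (fun z => decide (z < s.getD i 0))]
      rw [show s.getD i 0 = s[i] from List.getD_eq_getElem _ _ his]
      have hstep2 : s.countP (fun z => decide (z < s[i])) =
          s.countP (fun z => decide (f z < f s[i])) := by
        apply List.countP_congr
        intro x hx
        simp only [decide_eq_true_eq]
        exact hmono x (hperm_ts.mem_iff.mpr hx) s[i] hsit
      rw [hstep2]
      have hstep3 : s.countP (fun z => decide (f z < f s[i])) =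
          (s.map f).countP (fun z => decide (z < f s[i])) := by
        rw [List.countP_map]; rfl
      rw [hstep3, hperm_sfπ.countP_eq]
    have hfsimem : f s[i] ∈ π := hperm_sfπ.mem_iff.mp (List.mem_map_of_mem (f := f) (List.getElem_mem his))
    exact (rank_inj (List.getElem_mem hiπ) hfsimem hchain).symm
  refine ⟨q, hq, ?_⟩
  have hmapped := dliter_map f htiter
  rwa [hmap_t, hfinal] at hmapped
end

section
/- For K ≥ 2, every permutation of size at most K having exactly one descent can be obtained from the identity permutation by one duplication-loss step of width at most K. -/
lemma interleave_nil_left : ∀ l : List ℕ, Interleave l [] l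
  | [] => .nil
  | _ :: t => .right (interleave_nil_left t)

lemma descents_zero_sorted : ∀ l : List ℕ, descents l = 0 → l.Pairwise (· ≤ ·) := by
  intro l
  induction l with
  | nil => intro _; simp
  | cons x t ih =>
    cases t with
    | nil => intro _; simp
    | cons y s =>
      intro h
      simp only [descents, List.tail_cons, List.zip_cons_cons, List.countP_cons] at h ih
      rw [List.pairwise_cons_cons_iff_of_trans]
      by_cases hyx : y < x
      · simp [hyx] at h
      · exact ⟨le_of_not_gt hyx, ih (by simpa [hyx] using h)⟩

lemma descents_one_split : ∀ l : List ℕ, descents l = 1 →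
    ∃ a b : List ℕ, l = a ++ b ∧ a.Pairwise (· ≤ ·) ∧ b.Pairwise (· ≤ ·) := by
  intro l
  induction l with
  | nil => intro h; simp [descents] at h
  | cons x t ih =>
    cases t with
    | nil => intro h; simp [descents] at h
    | cons y s =>
      intro h
      simp only [descents, List.tail_cons, List.zip_cons_cons, List.countP_cons] at h ih
      by_cases hyx : y < x
      · refine ⟨[x], y :: s, by simp, by simp, ?_⟩
        exact descents_zero_sorted _ (by simpa [descents, hyx] using h)
      · obtain ⟨a, b, he, ha, hb⟩ := ih (by simpa [hyx] using h)
        cases a with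
        | nil =>
          rw [List.nil_append] at he
          exact ⟨[x], b, by rw [he]; rfl, by simp, hb⟩
        | cons z a' =>
          obtain ⟨rfl, rfl⟩ : z = y ∧ a' ++ b = s := by
            have := he; simp at this; exact ⟨this.1.symm, this.2.symm⟩
          exact ⟨x :: z :: a', b, by simp, List.pairwise_cons_cons_iff_of_trans.mpr ⟨le_of_not_gt hyx, ha⟩, hb⟩

lemma interleave_of_sorted : ∀ (l a b : List ℕ), l.Pairwise (· ≤ ·) → a.Pairwise (· ≤ ·) →
    b.Pairwise (· ≤ ·) → l.Perm (a ++ b) → Interleave l a b := by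
  intro l
  induction l with
  | nil =>
    intro a b _ _ _ hp
    obtain ⟨rfl, rfl⟩ := List.append_eq_nil_iff.mp (List.Perm.nil_eq hp).symm
    exact .nil
  | cons x t ih =>
    intro a b hl ha hb hp
    obtain ⟨hmin, htsort⟩ := List.pairwise_cons.mp hl
    have hmin' : ∀ m ∈ a ++ b, x ≤ m := by
      intro m hm
      rcases List.mem_cons.mp (hp.mem_iff.mpr hm) with h1 | h1
      · exact le_of_eq h1.symm
      · exact hmin m h1
    cases a with
    | nil =>
      have : x :: t = b := List.Perm.eq_of_pairwise' hl hb (by simpa using hp)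
      rw [← this]; exact interleave_nil_left _
    | cons y a' =>
      by_cases hxy : x = y
      · subst hxy
        refine .left (ih a' b htsort (List.pairwise_cons.mp ha).2 hb ?_)
        have : (x :: t).Perm (x :: (a' ++ b)) := by simpa using hp
        exact (List.perm_cons x).mp this
      · have hxb : x ∈ b := by
          have hxin : x ∈ (y :: a') ++ b := hp.mem_iff.mp (by simp)
          rcases List.mem_append.mp hxin with h1 | h1
          · have hyx2 : y ≤ x := by
              rcases List.mem_cons.mp h1 with h2 | h2
              · exact le_of_eq h2.symm
              · exact (List.pairwise_cons.mp ha).1 x h2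
            exact absurd (le_antisymm (hmin' y (by simp)) hyx2) hxy
          · exact h1
        cases b with
        | nil => simp at hxb
        | cons z b' =>
          have hxz : x = z := le_antisymm (hmin' z (by simp)) (by
            rcases List.mem_cons.mp hxb with h2 | h2
            · exact le_of_eq h2.symm
            · exact (List.pairwise_cons.mp hb).1 x h2)
          subst hxz
          refine .right (ih (y :: a') b' htsort ha (List.pairwise_cons.mp hb).2 ?_)
          have : (x :: t).Perm (x :: ((y :: a') ++ b')) := hp.trans List.perm_middle
          exact (List.perm_cons x).mp this

theorem stmt9 (K n : ℕ) (hK : 2 ≤ K) (hn : n ≤ K) (l : List ℕ) (h : IsPermList n l)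
    (hd : descents l = 1) : DLStep K (List.range' 1 n) l := by
  obtain ⟨a, b, rfl, ha, hb⟩ := descents_one_split l hd
  refine ⟨[], List.range' 1 n, [], a, b, by simp, by simp [hn], ?_, by simp⟩
  refine interleave_of_sorted _ _ _ ?_ ha hb (h.symm)
  exact (List.pairwise_lt_range' (s := 1) (n := n)).imp le_of_lt
end

section
/- Let K ≥ 2. A permutation σ of size K+1 with exactly one descent fails to be obtainable from the identity 1 2 ... (K+1) by one duplication-loss step of width at most K if and only if σ does not start with the value 1 and does not end with the value K+1. -/
lemma descents_cons₂ (x y : ℕ) (t : List ℕ) :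
    descents (x :: y :: t) = descents (y :: t) + (if y < x then 1 else 0) := by
  simp [descents, List.countP_cons]

/-- A list with at most one descent splits into two `≤`-chains. -/
lemma split_of_descents_le_one : ∀ l : List ℕ, descents l ≤ 1 →
    ∃ A B : List ℕ, A ++ B = l ∧ A.Chain' (· ≤ ·) ∧ B.Chain' (· ≤ ·)
  | [], _ => ⟨[], [], rfl, List.isChain_nil, List.isChain_nil⟩
  | [x], _ => ⟨[x], [], rfl, List.isChain_singleton x, List.isChain_nil⟩
  | x :: y :: t, hle => by
    rw [descents_cons₂] at hle
    by_cases hxy : y < x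
    · simp only [hxy, if_true] at hle
      have h0 : descents (y :: t) = 0 := by omega
      have hch : (y :: t).Chain' (· ≤ ·) := by
        clear hle hxy x
        induction t generalizing y with
        | nil => exact List.isChain_singleton y
        | cons z t ih =>
          rw [descents_cons₂] at h0
          refine List.isChain_cons_cons.2 ⟨?_, ih z (by omega)⟩
          by_contra hc; simp [show z < y by omega] at h0
      exact ⟨[x], y :: t, rfl, List.isChain_singleton x, hch⟩
    · simp only [hxy, if_false] at hle
      obtain ⟨A, B, hAB, hA, hB⟩ := split_of_descents_le_one (y :: t) (by omega)
      cases A with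
      | nil => exact ⟨[x], B, by simpa using hAB, List.isChain_singleton x, hB⟩
      | cons a A' =>
        have ha : a = y := by
          have := congrArg (fun l => l.head?) hAB; simpa using this
        subst ha
        exact ⟨x :: a :: A', B, by simpa using hAB,
          List.isChain_cons_cons.2 ⟨le_of_not_gt hxy, hA⟩, hB⟩

lemma pairwise_lt_of_chain'_le {A : List ℕ} (hc : A.Chain' (· ≤ ·)) (hn : A.Nodup) :
    A.Pairwise (· < ·) := by
  have hp : A.Pairwise (· ≤ ·) := List.isChain_iff_pairwise.1 hc
  exact (hp.and hn).imp (fun h => lt_of_le_of_ne h.1 h.2)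

/-- The sorted merge is an interleave. -/
lemma interleave_of_sorted_s10 : ∀ s w1 w2 : List ℕ, s.Pairwise (· < ·) →
    w1.Pairwise (· < ·) → w2.Pairwise (· < ·) → s.Perm (w1 ++ w2) →
    Interleave s w1 w2
  | [], w1, w2, _, _, _, hp => by
    have : w1 ++ w2 = [] := (hp.symm).eq_nil
    rcases List.append_eq_nil_iff.1 this with ⟨h1, h2⟩
    subst h1; subst h2; exact Interleave.nil
  | x :: s', w1, w2, hs, h1, h2, hp => by
    have hsnd : (x :: s').Nodup := hs.imp (fun h => Nat.ne_of_lt h)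
    have hxmem : x ∈ w1 ++ w2 := hp.mem_iff.1 List.mem_cons_self
    have hmin : ∀ z ∈ w1 ++ w2, z ≠ x → x < z := by
      intro z hz hne
      have hzm : z ∈ x :: s' := hp.symm.mem_iff.1 hz
      rcases List.mem_cons.1 hzm with heq | hz'
      · exact absurd heq hne
      · exact List.rel_of_pairwise_cons hs hz'
    rcases List.mem_append.1 hxmem with hx1 | hx2
    · cases w1 with
      | nil => simp at hx1
      | cons a w1' =>
        have hax : a = x := by
          by_contra hne
          have hx_in : x ∈ w1' := by
            rcases List.mem_cons.1 hx1 with h | h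
            · exact absurd h.symm hne
            · exact h
          have h1' : a < x := List.rel_of_pairwise_cons h1 hx_in
          have h2' : x < a := hmin a (by simp) (fun hh => hne hh)
          omega
        subst hax
        have hp' : s'.Perm (w1' ++ w2) := by
          have hpp : (a :: s').Perm (a :: (w1' ++ w2)) := by simpa using hp
          exact hpp.cons_inv
        exact Interleave.left (interleave_of_sorted_s10 s' w1' w2 hs.of_cons
          h1.of_cons h2 hp')
    · cases w2 with
      | nil => simp at hx2
      | cons a w2' =>
        have hax : a = x := by
          by_contra hne
          have hx_in : x ∈ w2' := by
            rcases List.mem_cons.1 hx2 with h | h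
            · exact absurd h.symm hne
            · exact h
          have h1' : a < x := List.rel_of_pairwise_cons h2 hx_in
          have h2' : x < a := hmin a (by simp) (fun hh => hne hh)
          omega
        subst hax
        have hp' : s'.Perm (w1 ++ w2') := by
          have : (a :: s').Perm (a :: (w1 ++ w2')) :=
            hp.trans List.perm_middle
          exact this.cons_inv
        exact Interleave.right (interleave_of_sorted_s10 s' w1 w2' hs.of_cons
          h1 h2.of_cons hp')

lemma interleave_length {w w1 w2 : List ℕ} (h : Interleave w w1 w2) :
    w.length = w1.length + w2.length := by
  induction h with
  | nil => rfl
  | left _ ih => simp [ih]; omega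
  | right _ ih => simp [ih]; omega

lemma descents_append_le (A B : List ℕ) : descents A ≤ descents (A ++ B) := by
  induction A with
  | nil => simp [descents]
  | cons x A ih =>
    cases A with
    | nil => simp [descents]
    | cons y t =>
      have e : (x :: y :: t) ++ B = x :: y :: (t ++ B) := rfl
      rw [e, descents_cons₂, descents_cons₂]
      have := ih
      simp only [List.cons_append] at this
      omega

theorem stmt10 (K : ℕ) (hK : 2 ≤ K) (l : List ℕ) (h : IsPermList (K + 1) l)
    (hd : descents l = 1) :
    ¬ DLStep K (List.range' 1 (K + 1)) l ↔ (l.getD 0 0 ≠ 1 ∧ l.getD K 0 ≠ K + 1) := by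
  have hlen : l.length = K + 1 := by
    have := h.length_eq; simpa using this
  have hnodup : l.Nodup := h.nodup_iff.2 (List.nodup_range' (s := 1) (n := K + 1))
  rw [show (l.getD 0 0 ≠ 1 ∧ l.getD K 0 ≠ K + 1) ↔
      ¬ (l.getD 0 0 = 1 ∨ l.getD K 0 = K + 1) by tauto, not_iff_not]
  constructor
  · rintro ⟨pre, w, post, w1, w2, hτ, hw, hint, hσ⟩
    have hτlen : pre.length + (w.length + post.length) = K + 1 := by
      have := congrArg List.length hτ; simpa using this.symm
    by_cases hpre : pre = []
    · -- post nonempty, l ends with K+1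
      right
      have hpost : post ≠ [] := by
        intro hp; rw [hpre, hp] at hτlen; simp at hτlen; omega
      have hgl : l.getLast? = (List.range' 1 (K + 1)).getLast? := by
        rw [hσ, hτ]
        rw [List.getLast?_append_of_ne_nil _ hpost,
            List.getLast?_append_of_ne_nil _ hpost]
      have hrl : (List.range' 1 (K + 1)).getLast? = some (K + 1) := by
        rw [List.range'_concat]
        rw [List.getLast?_append_of_ne_nil _ (by simp)]
        simp; omega
      have : l.getLast? = some (K + 1) := hgl.trans hrl
      rw [List.getLast?_eq_getElem?] at this
      rw [hlen] at this
      simp only [Nat.add_sub_cancel] at this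
      simp [List.getD, this]
    · -- pre nonempty, l starts with 1
      left
      have hg : l.getD 0 0 = (List.range' 1 (K + 1)).getD 0 0 := by
        rw [hσ, hτ]
        cases pre with
        | nil => exact absurd rfl hpre
        | cons a p => simp
      rw [hg]
      rw [List.range'_succ]
      simp
  · intro hcase
    rcases hcase with hhead | hlast
    · -- l = 1 :: rest
      obtain ⟨x, rest, hx⟩ : ∃ x rest, l = x :: rest := by
        cases l with
        | nil => simp at hlen
        | cons a t => exact ⟨a, t, rfl⟩
      have hx1 : x = 1 := by rw [hx] at hhead; simpa using hhead
      subst hx1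
      have hrestperm : rest.Perm (List.range' 2 K) := by
        have := h; rw [hx] at this
        unfold IsPermList at this
        rw [List.range'_succ] at this
        exact this.cons_inv
      have hrestlen : rest.length = K := by
        rw [hx] at hlen; simpa using hlen
      have hrestd : descents rest ≤ 1 := by
        cases rest with
        | nil => simp at hrestlen; omega
        | cons y t =>
          have hy : y ∈ List.range' 2 K := hrestperm.mem_iff.1 (by simp)
          have hy2 : 2 ≤ y := (List.mem_range'_1.1 hy).1
          rw [hx, descents_cons₂] at hd
          simp [show ¬ y < 1 by omega] at hd
          omega
      obtain ⟨A, B, hAB, hA, hB⟩ := split_of_descents_le_one rest hrestd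
      have hrestnd : rest.Nodup := by rw [hx] at hnodup; exact hnodup.of_cons
      have hAnd : A.Nodup := by rw [← hAB] at hrestnd; exact hrestnd.of_append_left
      have hBnd : B.Nodup := by rw [← hAB] at hrestnd; exact hrestnd.of_append_right
      have hint : Interleave (List.range' 2 K) A B := by
        apply interleave_of_sorted_s10 _ _ _ (List.pairwise_lt_range' (s := 2) (n := K))
          (pairwise_lt_of_chain'_le hA hAnd) (pairwise_lt_of_chain'_le hB hBnd)
        rw [hAB]; exact hrestperm.symm
      refine ⟨[1], List.range' 2 K, [], A, B, ?_, by simp, hint, ?_⟩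
      · rw [List.range'_succ]; simp
      · rw [hx, ← hAB]; simp
    · -- l = rest ++ [K + 1]
      have hlne : l ≠ [] := by intro hh; rw [hh] at hlen; simp at hlen
      have hlast' : l.getLast hlne = K + 1 := by
        have h1 : l.getLast? = some (l.getD K 0) := by
          rw [List.getLast?_eq_getElem?, hlen]
          simp only [Nat.add_sub_cancel]
          rw [List.getD_eq_getElem?_getD]
          have : K < l.length := by omega
          simp [List.getElem?_eq_getElem this]
        rw [List.getLast?_eq_getLast hlne] at h1
        have := Option.some.inj h1
        rw [this, hlast]
      obtain ⟨rest, hx⟩ : ∃ rest, l = rest ++ [K + 1] := by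
        refine ⟨l.dropLast, ?_⟩
        conv_lhs => rw [← List.dropLast_append_getLast hlne]
        rw [hlast']
      have hrestperm : rest.Perm (List.range' 1 K) := by
        have := h; rw [hx] at this
        unfold IsPermList at this
        rw [List.range'_concat] at this
        rw [show 1 + 1 * K = K + 1 by omega] at this
        exact (List.perm_append_right_iff [K + 1]).1 this
      have hrestd : descents rest ≤ 1 := by
        have := descents_append_le rest [K + 1]
        rw [← hx] at this; omega
      obtain ⟨A, B, hAB, hA, hB⟩ := split_of_descents_le_one rest hrestd
      have hrestnd : rest.Nodup := by
        rw [hx] at hnodup; exact hnodup.of_append_left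
      have hAnd : A.Nodup := by rw [← hAB] at hrestnd; exact hrestnd.of_append_left
      have hBnd : B.Nodup := by rw [← hAB] at hrestnd; exact hrestnd.of_append_right
      have hint : Interleave (List.range' 1 K) A B := by
        apply interleave_of_sorted_s10 _ _ _ (List.pairwise_lt_range' (s := 1) (n := K))
          (pairwise_lt_of_chain'_le hA hAnd) (pairwise_lt_of_chain'_le hB hBnd)
        rw [hAB]; exact hrestperm.symm
      refine ⟨[], List.range' 1 K, [K + 1], A, B, ?_, by simp, hint, ?_⟩
      · rw [List.range'_concat]
        rw [show 1 + 1 * K = K + 1 by omega]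
        simp
      · rw [hx, ← hAB]; simp
end

section
/- Let σ ∈ Sₙ and let τ be the permutation of size n−1 obtained from σ by removing one element j (and renormalizing values). For any i ≠ j that is not a fixpoint of σ, either the corresponding element becomes a fixpoint in τ, or the size of its vp-vector in τ differs from the size of its vp-vector in σ by at most 1. -/
def removeElem (l : List ℕ) (j : ℕ) : List ℕ :=
  (l.erase j).map (fun x => if j < x then x - 1 else x)

lemma idx_map (j : ℕ) (hj1 : 1 ≤ j) : ∀ (l : List ℕ) (i : ℕ), j ∉ l → i ≠ j → 1 ≤ i →
    (∀ x ∈ l, 1 ≤ x) →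
    (l.map (fun x => if j < x then x - 1 else x)).idxOf (if j < i then i - 1 else i)
      = l.idxOf i := by
  intro l
  induction l with
  | nil => simp
  | cons a t ih =>
    intro i hjl hij hi1 hpos
    simp only [List.map_cons]
    have ha1 : 1 ≤ a := hpos a List.mem_cons_self
    have haj : a ≠ j := by intro h; exact hjl (h ▸ List.mem_cons_self)
    by_cases hai : a = i
    · subst hai
      simp
    · have hne : (if j < a then a - 1 else a) ≠ (if j < i then i - 1 else i) := by
        split <;> split <;> omega
      rw [List.idxOf_cons_ne _ hne, List.idxOf_cons_ne _ hai,
        ih i (fun h => hjl (List.mem_cons_of_mem a h)) hij hi1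
        (fun x hx => hpos x (List.mem_cons_of_mem a hx))]

lemma idx_erase : ∀ (l : List ℕ) (i j : ℕ), l.Nodup → i ∈ l → j ∈ l → i ≠ j →
    (l.erase j).idxOf i =
      if l.idxOf i < l.idxOf j then l.idxOf i else l.idxOf i - 1 := by
  intro l
  induction l with
  | nil => simp
  | cons a t ih =>
    intro i j hnd hi hj hij
    by_cases haj : a = j
    · subst haj
      rw [List.erase_cons_head]
      have hit : i ∈ t := by
        rcases List.mem_cons.mp hi with h | h
        · exact absurd h hij
        · exact h
      rw [List.idxOf_cons_self, List.idxOf_cons_ne _ (fun h => hij h.symm)]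
      simp [Nat.succ_sub_one]
    · rw [List.erase_cons_tail (by simp [haj] : ¬(a == j) = true)]
      have hjt : j ∈ t := by
        rcases List.mem_cons.mp hj with h | h
        · exact absurd h.symm haj
        · exact h
      rw [List.idxOf_cons_ne _ haj]
      by_cases hai : a = i
      · subst hai
        rw [List.idxOf_cons_self, List.idxOf_cons_self]
        simp
      · have hit : i ∈ t := by
          rcases List.mem_cons.mp hi with h | h
          · exact absurd h.symm hai
          · exact h
        rw [List.idxOf_cons_ne _ hai, List.idxOf_cons_ne _ hai,
          ih i j (List.Nodup.of_cons hnd) hit hjt hij]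
        have := List.idxOf_lt_length_iff.mpr hit
        have hne2 : List.idxOf i t ≠ List.idxOf j t := fun hh =>
          hij ((List.idxOf_inj hit).mp hh)
        split <;> split <;> omega

theorem stmt12 (n : ℕ) (l : List ℕ) (h : IsPermList n l) (i j : ℕ)
    (hj : j ∈ l) (hi : i ∈ l) (hij : i ≠ j) (hnf : l.idxOf i ≠ i - 1) :
    ((removeElem l j).idxOf (if j < i then i - 1 else i) = (if j < i then i - 1 else i) - 1) ∨
      Nat.dist
        (Nat.dist ((removeElem l j).idxOf (if j < i then i - 1 else i))
          ((if j < i then i - 1 else i) - 1))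
        (Nat.dist (l.idxOf i) (i - 1)) ≤ 1 := by
  right
  have hnd : l.Nodup := h.nodup_iff.mpr List.nodup_range'
  have hpos : ∀ x ∈ l, 1 ≤ x := by
    intro x hx
    have := h.mem_iff.mp hx
    rw [List.mem_range'] at this
    omega
  have hi1 : 1 ≤ i := hpos i hi
  have hj1 : 1 ≤ j := hpos j hj
  have hje : j ∉ l.erase j := fun hh => (List.Nodup.not_mem_erase hnd) hh
  have hpose : ∀ x ∈ l.erase j, 1 ≤ x := fun x hx => hpos x (List.mem_of_mem_erase hx)
  have hmap := idx_map j hj1 (l.erase j) i hje hij hi1 hpose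
  have her := idx_erase l i j hnd hi hj hij
  unfold removeElem
  rw [hmap, her]
  have hpq : l.idxOf i ≠ l.idxOf j := fun hh =>
    hij ((List.idxOf_inj hi).mp hh)
  have hp := List.idxOf_lt_length_iff.mpr hi
  simp only [Nat.dist]
  split <;> split <;> omega
end

section
/- For every permutation σ of size n ≥ 2, there exists an element j such that the permutation τ obtained from σ by removing j has at most one more fixpoint than σ. -/
def fixCount (l : List ℕ) : ℕ :=
  (List.range l.length).countP (fun k => decide (l.getD k 0 = k + 1))

lemma fixCount_eq_card (l : List ℕ) :
    fixCount l = ((Finset.range l.length).filter (fun k => l.getD k 0 = k + 1)).card := by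
  simp [fixCount, Finset.filter, Finset.range, Finset.card, List.countP_eq_length_filter,
    Multiset.range]

lemma main_aux (n : ℕ) (l : List ℕ) (h : IsPermList n l) (m : ℕ) (hm : m < n) (e : ℕ)
    (hA : ∀ k, k < m → k ≠ e → ¬ (l.getD k 0 = k + 2 ∧ l.getD m 0 < l.getD k 0))
    (hB : ∀ k, m ≤ k → k < n - 1 → k ≠ e →
      ¬ (l.getD (k + 1) 0 = k + 1 ∧ l.getD (k + 1) 0 < l.getD m 0)) :
    fixCount (removeElem l (l.getD m 0)) ≤ fixCount l + 1 := by
  have hlen : l.length = n := by simpa using h.length_eq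
  have hnd : l.Nodup := h.symm.nodup (List.nodup_range' (s := 1) (n := n))
  have hval : ∀ k, k < n → 1 ≤ l.getD k 0 ∧ l.getD k 0 ≤ n := by
    intro k hk
    have hmem : l.getD k 0 ∈ l := by
      rw [List.getD_eq_getElem l 0 (by omega)]; exact List.getElem_mem _
    have := h.mem_iff.mp hmem
    rw [List.mem_range'_1] at this
    omega
  set j := l.getD m 0 with hj
  have hm' : m < l.length := by omega
  have hjl : j = l[m] := List.getD_eq_getElem l 0 hm'
  have hjmem : j ∈ l := hjl ▸ List.getElem_mem _
  have hidx : l.idxOf j = m := by rw [hjl]; exact List.Nodup.idxOf_getElem hnd m hm'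
  have herase : l.erase j = l.eraseIdx m := by
    exact List.erase_eq_eraseIdx_of_idxOf hidx
  have hlent : (removeElem l j).length = n - 1 := by
    rw [removeElem, List.length_map, herase, List.length_eraseIdx, if_pos hm', hlen]
  have hne : ∀ k, k < n → k ≠ m → l.getD k 0 ≠ j := by
    intro k hk hkm
    rw [List.getD_eq_getElem l 0 (by omega), hjl]
    intro hq
    exact hkm (hnd.getElem_inj_iff.mp hq)
  have hτ1 : ∀ k, k < n - 1 → k < m →
      (removeElem l j).getD k 0 = if j < l.getD k 0 then l.getD k 0 - 1 else l.getD k 0 := by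
    intro k hk hkm
    have hk' : k < (removeElem l j).length := by omega
    have hki : k < (l.eraseIdx m).length := by
      rw [List.length_eraseIdx, if_pos hm']; omega
    rw [List.getD_eq_getElem _ 0 hk']
    simp only [removeElem, herase, List.getElem_map]
    rw [List.getElem_eraseIdx_of_lt hki hkm,
      List.getD_eq_getElem l 0 (by omega : k < l.length)]
  have hτ2 : ∀ k, k < n - 1 → m ≤ k →
      (removeElem l j).getD k 0 =
        if j < l.getD (k + 1) 0 then l.getD (k + 1) 0 - 1 else l.getD (k + 1) 0 := by
    intro k hk hkm
    have hk' : k < (removeElem l j).length := by omega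
    have hki : k < (l.eraseIdx m).length := by
      rw [List.length_eraseIdx, if_pos hm']; omega
    rw [List.getD_eq_getElem _ 0 hk']
    simp only [removeElem, herase, List.getElem_map]
    rw [List.getElem_eraseIdx_of_ge hki hkm,
      List.getD_eq_getElem l 0 (by omega : k + 1 < l.length)]
  rw [fixCount_eq_card, fixCount_eq_card, hlent, hlen]
  set S := (Finset.range n).filter (fun k => l.getD k 0 = k + 1) with hS
  set T := (Finset.range (n - 1)).filter (fun k => (removeElem l j).getD k 0 = k + 1) with hT
  have key : ∀ k ∈ T.erase e, (if k < m then k else k + 1) ∈ S := by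
    intro k hk
    rw [Finset.mem_erase] at hk
    obtain ⟨hke, hkT⟩ := hk
    rw [hT, Finset.mem_filter, Finset.mem_range] at hkT
    obtain ⟨hk1, hk2⟩ := hkT
    rw [hS, Finset.mem_filter, Finset.mem_range]
    by_cases hkm : k < m
    · rw [if_pos hkm]
      rw [hτ1 k hk1 hkm] at hk2
      have hb := (hval k (by omega)).1
      have hnej := hne k (by omega) (by omega)
      split_ifs at hk2 with hlt
      · exact absurd ⟨by omega, by omega⟩ (hA k hkm hke)
      · exact ⟨by omega, hk2⟩
    · rw [if_neg hkm]
      rw [hτ2 k hk1 (by omega)] at hk2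
      have hb := (hval (k + 1) (by omega)).1
      have hnej : l.getD (k + 1) 0 ≠ j := hne (k + 1) (by omega) (by omega)
      split_ifs at hk2 with hlt
      · exact ⟨by omega, by omega⟩
      · exact absurd ⟨by omega, by omega⟩ (hB k (by omega) hk1 hke)
  have hinj : Set.InjOn (fun k => if k < m then k else k + 1) (T.erase e) := by
    intro a _ b _ hab
    simp only at hab
    split_ifs at hab <;> omega
  have h1 : (T.erase e).card ≤ S.card := Finset.card_le_card_of_injOn _ key hinj
  have h2 : T.card ≤ (T.erase e).card + 1 := by
    by_cases he : e ∈ T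
    · have hpos : 1 ≤ T.card := Finset.card_pos.mpr ⟨e, he⟩
      rw [Finset.card_erase_of_mem he]; omega
    · rw [Finset.erase_eq_of_notMem he]; omega
  omega

theorem stmt13 (n : ℕ) (hn : 2 ≤ n) (l : List ℕ) (h : IsPermList n l) :
    ∃ j ∈ l, fixCount (removeElem l j) ≤ fixCount l + 1 := by
  have hlen : l.length = n := by simpa using h.length_eq
  have hmem : ∀ m, m < n → l.getD m 0 ∈ l := by
    intro m hm
    rw [List.getD_eq_getElem l 0 (by omega)]; exact List.getElem_mem _
  by_cases h1 : ∃ m, m < n ∧ l.getD m 0 = m + 1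
  · obtain ⟨m, hm, hfix⟩ := h1
    refine ⟨l.getD m 0, hmem m hm, main_aux n l h m hm n ?_ ?_⟩
    · intro k hk hke hc; obtain ⟨hc1, hc2⟩ := hc; omega
    · intro k hk1 hk2 hke hc; obtain ⟨hc1, hc2⟩ := hc; omega
  · by_cases h2 : ∃ m, m < n ∧ l.getD m 0 = m
    · obtain ⟨m, hm, hfix⟩ := h2
      refine ⟨l.getD m 0, hmem m hm, main_aux n l h m hm (m - 1) ?_ ?_⟩
      · intro k hk hke hc; obtain ⟨hc1, hc2⟩ := hc; omega
      · intro k hk1 hk2 hke hc; obtain ⟨hc1, hc2⟩ := hc; omega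
    · push_neg at h1 h2
      refine ⟨l.getD 0 0, hmem 0 (by omega), main_aux n l h 0 (by omega) n ?_ ?_⟩
      · intro k hk hke hc; omega
      · intro k hk1 hk2 hke hc
        obtain ⟨hc1, hc2⟩ := hc
        exact h2 (k + 1) (by omega) hc1
end

section
/- Suppose σ = σ' (j+1)(j+2)...n where σ' is a permutation of {1,...,j}. If σ is obtainable from the identity 1 2 ... n by p duplication-loss steps of width at most K, then σ is obtainable by p duplication-loss steps of width at most K in which every duplicated window involves only elements of {1,...,j}. -/
def DLStepR (K j : ℕ) (τ σ : List ℕ) : Prop :=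
  ∃ pre w post w1 w2 : List ℕ, τ = pre ++ w ++ post ∧ w.length ≤ K ∧
    (∀ x ∈ w, x ≤ j) ∧ Interleave w w1 w2 ∧ σ = pre ++ (w1 ++ w2) ++ post

def DLIterR (K j : ℕ) : ℕ → List ℕ → List ℕ → Prop
  | 0, τ, σ => τ = σ
  | p + 1, τ, σ => ∃ μ, DLStepR K j τ μ ∧ DLIterR K j p μ σ

lemma interleave_filter (P : ℕ → Bool) {l a b : List ℕ} (h : Interleave l a b) :
    Interleave (l.filter P) (a.filter P) (b.filter P) := by
  induction h with
  | nil => exact .nil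
  | @left x l a b h ih =>
      cases hx : P x with
      | true => simpa [List.filter_cons, hx] using Interleave.left ih
      | false => simpa [List.filter_cons, hx] using ih
  | @right x l a b h ih =>
      cases hx : P x with
      | true => simpa [List.filter_cons, hx] using Interleave.right ih
      | false => simpa [List.filter_cons, hx] using ih

lemma dlstep_filter (P : ℕ → Bool) {K : ℕ} {τ σ : List ℕ} (h : DLStep K τ σ) :
    DLStep K (τ.filter P) (σ.filter P) := by
  obtain ⟨pre, w, post, w1, w2, ht, hK, hint, hs⟩ := h
  exact ⟨pre.filter P, w.filter P, post.filter P, w1.filter P, w2.filter P,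
    by simp [ht, List.filter_append],
    le_trans (List.length_filter_le _ _) hK,
    interleave_filter P hint,
    by simp [hs, List.filter_append]⟩

lemma dliter_filter (P : ℕ → Bool) {K : ℕ} : ∀ {q : ℕ} {τ σ : List ℕ},
    DLIter K q τ σ → DLIter K q (τ.filter P) (σ.filter P)
  | 0, τ, σ, h => by simp only [DLIter] at *; rw [h]
  | q + 1, τ, σ, ⟨μ, hstep, hiter⟩ =>
    ⟨μ.filter P, dlstep_filter P hstep, dliter_filter P hiter⟩

lemma mySmallLift {K j : ℕ} (t : List ℕ) : ∀ (q : ℕ) (a b : List ℕ),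
    DLIter K q a b → (∀ x ∈ a, x ≤ j) → DLIterR K j q (a ++ t) (b ++ t)
  | 0, a, b, h, _ => by simp only [DLIter] at h; rw [h]; rfl
  | q + 1, a, b, ⟨μ, hstep, hiter⟩, ha => by
    refine ⟨μ ++ t, ?_, mySmallLift t q μ b hiter
      (fun x hx => ha x ((dlstep_perm hstep).mem_iff.2 hx))⟩
    obtain ⟨pre, w, post, w1, w2, ht, hK, hint, hs⟩ := hstep
    refine ⟨pre, w, post ++ t, w1, w2, by rw [ht]; simp, hK, ?_, hint, by rw [hs]; simp⟩
    intro x hx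
    exact ha x (by rw [ht]; simp [hx])

theorem stmt15 (n j K p : ℕ) (hj : j ≤ n) (σ' : List ℕ) (h' : IsPermList j σ')
    (σ : List ℕ) (hσ : σ = σ' ++ List.range' (j + 1) (n - j))
    (hobt : ObtainableIn K p (List.range' 1 n) σ) :
    ∃ q ≤ p, DLIterR K j q (List.range' 1 n) σ := by
  obtain ⟨q, hq, hiter⟩ := hobt
  refine ⟨q, hq, ?_⟩
  set P : ℕ → Bool := fun x => decide (x ≤ j) with hP
  have hsplit : List.range' 1 n = List.range' 1 j ++ List.range' (j + 1) (n - j) := by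
    have h := List.range'_append (s := 1) (m := j) (n := n - j) (step := 1)
    rw [show 1 + 1 * j = j + 1 by omega, show j + (n - j) = n by omega] at h
    exact h.symm
  have hmem1 : ∀ x ∈ List.range' 1 j, x ≤ j := by
    intro x hx
    rw [List.mem_range'_1] at hx
    omega
  have hfrange : (List.range' 1 n).filter P = List.range' 1 j := by
    rw [hsplit, List.filter_append]
    have h1 : (List.range' 1 j).filter P = List.range' 1 j :=
      List.filter_eq_self.2 (fun x hx => by simp [hP, hmem1 x hx])
    have h2 : (List.range' (j + 1) (n - j)).filter P = [] := by
      apply List.filter_eq_nil_iff.2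
      intro x hx
      rw [List.mem_range'_1] at hx
      simp [hP]
      omega
    rw [h1, h2, List.append_nil]
  have hσ'mem : ∀ x ∈ σ', x ≤ j := fun x hx => hmem1 x (h'.mem_iff.1 hx)
  have hfσ : σ.filter P = σ' := by
    rw [hσ, List.filter_append]
    have h1 : σ'.filter P = σ' :=
      List.filter_eq_self.2 (fun x hx => by simp [hP, hσ'mem x hx])
    have h2 : (List.range' (j + 1) (n - j)).filter P = [] := by
      apply List.filter_eq_nil_iff.2
      intro x hx
      rw [List.mem_range'_1] at hx
      simp [hP]
      omega
    rw [h1, h2, List.append_nil]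
  have hiterF := dliter_filter P hiter
  rw [hfrange, hfσ] at hiterF
  have := mySmallLift (List.range' (j + 1) (n - j)) q (List.range' 1 j) σ' hiterF hmem1
  rw [← hsplit, ← hσ] at this
  exact this
end
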